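/- arXiv:2111.10358 — 5 statements merged into one kernel-verified Lean document; each statement's English description precedes it below -/
import Mathlib

section
/- Let p : (0,∞) → ℝ be twice continuously differentiable, and let X : (0,∞) × ℝ → ℝ be twice continuously differentiable and satisfy, in the variables (x,y), the equation X_xx + (2y/x)·X_xy + ((y/x)² − p'(x))·X_yy = 0 at every point. Then there exists a continuously differentiable function Q̃ on D = {(η,w,v) ∈ ℝ³ : η > 0, v > 0} such that every C¹ map (η,w,v) : Ω → D on an open set Ω ⊆ ℝ² (space-time variables (x,t)) satisfying pointwise η_t − (w/v)_x = 0, w_t + (p(v/η))_x = 0 and v_t = 0 also satisfies ∂_t[η·X(v/η, w/η)] + ∂_x[Q̃(η,w,v)] = 0 at every point of Ω. -/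
open Set intervalIntegral

namespace PPF
noncomputable def hh (X : ℝ × ℝ → ℝ) (q : ℝ × ℝ) : ℝ :=
  fderiv ℝ X q (1, 0) + (2 * q.2 / q.1) * fderiv ℝ X q (0, 1)

noncomputable def gg (p : ℝ → ℝ) (X : ℝ × ℝ → ℝ) (q : ℝ × ℝ) : ℝ :=
  (deriv p q.1 - q.2 ^ 2 / q.1 ^ 2) * fderiv ℝ X q (0, 1)

noncomputable def kk (p : ℝ → ℝ) (X : ℝ × ℝ → ℝ) (q : ℝ × ℝ) : ℝ :=
  -(2 * q.2 / q.1 ^ 2) * fderiv ℝ X q (0, 1) +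
    (deriv p q.1 - q.2 ^ 2 / q.1 ^ 2) * fderiv ℝ (fun r => fderiv ℝ X r (0, 1)) q (0, 1)

noncomputable def WW (p : ℝ → ℝ) (X : ℝ × ℝ → ℝ) (q : ℝ × ℝ) : ℝ :=
  (∫ s in (0:ℝ)..q.2, hh X (q.1, s)) + ∫ t in (1:ℝ)..q.1, gg p X (t, 0)

def U : Set (ℝ × ℝ) := {q | 0 < q.1}

lemma U_open : IsOpen U := isOpen_lt continuous_const continuous_fst

lemma U_eq : (Set.Ioi (0:ℝ) ×ˢ (Set.univ : Set ℝ)) = U := by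
  ext q; simp [U, Set.mem_prod]

variable {p : ℝ → ℝ} {X : ℝ × ℝ → ℝ}

section basic
variable (hX : ContDiffOn ℝ 2 X (Set.Ioi 0 ×ˢ (Set.univ : Set ℝ)))

include hX

lemma hXU : ContDiffOn ℝ 2 X U := U_eq ▸ hX

lemma fderiv_contDiffOn : ContDiffOn ℝ 1 (fderiv ℝ X) U :=
  (hXU hX).fderiv_of_isOpen U_open (by norm_num)

lemma Xcomp_contDiffOn (c : ℝ × ℝ) :
    ContDiffOn ℝ 1 (fun q => fderiv ℝ X q c) U := by
  have := (ContinuousLinearMap.apply ℝ ℝ c).contDiff.comp_contDiffOn (fderiv_contDiffOn hX)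
  exact this

lemma Xcomp_continuousOn (c : ℝ × ℝ) :
    ContinuousOn (fun q => fderiv ℝ X q c) U :=
  (Xcomp_contDiffOn hX c).continuousOn

lemma Xcomp_diffAt (c : ℝ × ℝ) {q : ℝ × ℝ} (hq : q ∈ U) :
    DifferentiableAt ℝ (fun r => fderiv ℝ X r c) q :=
  (((Xcomp_contDiffOn hX c) q hq).contDiffAt (U_open.mem_nhds hq)).differentiableAt one_ne_zero

lemma fderiv_diffAt {q : ℝ × ℝ} (hq : q ∈ U) :
    DifferentiableAt ℝ (fderiv ℝ X) q :=
  (((fderiv_contDiffOn hX) q hq).contDiffAt (U_open.mem_nhds hq)).differentiableAt one_ne_zero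

/-- partial of the directional derivative as entry of the second fderiv -/
lemma hasFDerivAt_dirDeriv (c : ℝ × ℝ) {q : ℝ × ℝ} (hq : q ∈ U) :
    HasFDerivAt (fun r => fderiv ℝ X r c)
      ((ContinuousLinearMap.apply ℝ ℝ c).comp (fderiv ℝ (fderiv ℝ X) q)) q :=
  (ContinuousLinearMap.apply ℝ ℝ c).hasFDerivAt.comp q (fderiv_diffAt hX hq).hasFDerivAt

lemma snd_fderiv_entry (c u : ℝ × ℝ) {q : ℝ × ℝ} (hq : q ∈ U) :
    fderiv ℝ (fun r => fderiv ℝ X r c) q u = fderiv ℝ (fderiv ℝ X) q u c := by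
  rw [(hasFDerivAt_dirDeriv hX c hq).fderiv]; rfl

/-- Clairaut -/
lemma symm_second {q : ℝ × ℝ} (hq : q ∈ U) (u c : ℝ × ℝ) :
    fderiv ℝ (fun r => fderiv ℝ X r c) q u = fderiv ℝ (fun r => fderiv ℝ X r u) q c := by
  rw [snd_fderiv_entry hX c u hq, snd_fderiv_entry hX u c hq]
  exact ((hXU hX) q hq).contDiffAt (U_open.mem_nhds hq) |>.isSymmSndFDerivAt (by simp) u c

lemma dir1 (c : ℝ × ℝ) {x y : ℝ} (hx : 0 < x) :
    HasDerivAt (fun t => fderiv ℝ X (t, y) c)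
      (fderiv ℝ (fun r => fderiv ℝ X r c) (x, y) (1, 0)) x := by
  have h1 : HasDerivAt (fun t : ℝ => (t, y)) ((1:ℝ), (0:ℝ)) x :=
    (hasDerivAt_id x).prodMk (hasDerivAt_const x y)
  have h2 := (hasFDerivAt_dirDeriv hX c (show (x,y) ∈ U from hx)).comp_hasDerivAt x h1
  rw [snd_fderiv_entry hX c (1,0) (show (x,y) ∈ U from hx)]
  exact h2

lemma dir2 (c : ℝ × ℝ) {x y : ℝ} (hx : 0 < x) :
    HasDerivAt (fun s => fderiv ℝ X (x, s) c)
      (fderiv ℝ (fun r => fderiv ℝ X r c) (x, y) (0, 1)) y := by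
  have h1 : HasDerivAt (fun s : ℝ => (x, s)) ((0:ℝ), (1:ℝ)) y :=
    (hasDerivAt_const y x).prodMk (hasDerivAt_id y)
  have h2 := (hasFDerivAt_dirDeriv hX c (show (x,y) ∈ U from hx)).comp_hasDerivAt y h1
  rw [snd_fderiv_entry hX c (0,1) (show (x,y) ∈ U from hx)]
  exact h2

end basic

section main

variable (hp : ContDiffOn ℝ 2 p (Set.Ioi 0))
  (hX : ContDiffOn ℝ 2 X (Set.Ioi 0 ×ˢ (Set.univ : Set ℝ)))

include hX in
lemma gg_hasDerivAt_snd {x y : ℝ} (hx : 0 < x) :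
    HasDerivAt (fun s => gg p X (x, s)) (kk p X (x, y)) y := by
  have h1 : HasDerivAt (fun s : ℝ => deriv p x - s ^ 2 / x ^ 2) (-(2 * y / x ^ 2)) y := by
    have := ((hasDerivAt_pow 2 y).div_const (x ^ 2)).const_sub (deriv p x)
    refine this.congr_deriv ?_
    ring
  have h2 := dir2 hX ((0:ℝ),(1:ℝ)) (y := y) hx
  have h3 := (h1.fun_mul h2)
  have : HasDerivAt (fun s => gg p X (x, s))
      (-(2 * y / x ^ 2) * fderiv ℝ X (x, y) (0,1) +
        (deriv p x - y ^ 2 / x ^ 2) * fderiv ℝ (fun r => fderiv ℝ X r (0,1)) (x, y) (0,1)) y := by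
    simpa [gg] using h3
  simpa [kk] using this

include hX in
lemma hh_hasDerivAt_fst
    (hXpde : ∀ x y : ℝ, 0 < x →
      fderiv ℝ (fun q => fderiv ℝ X q (1, 0)) (x, y) (1, 0)
        + (2 * y / x) * fderiv ℝ (fun q => fderiv ℝ X q (1, 0)) (x, y) (0, 1)
        + ((y / x) ^ 2 - deriv p x) *
            fderiv ℝ (fun q => fderiv ℝ X q (0, 1)) (x, y) (0, 1) = 0)
    {x y : ℝ} (hx : 0 < x) :
    HasDerivAt (fun t => hh X (t, y)) (kk p X (x, y)) x := by
  have h1 : HasDerivAt (fun t : ℝ => 2 * y / t) (-(2 * y) / x ^ 2) x := by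
    have := (hasDerivAt_const x (2 * y)).fun_div (hasDerivAt_id x) hx.ne'
    refine this.congr_deriv ?_
    simp only [id]; ring
  have h2 := dir1 hX ((0:ℝ),(1:ℝ)) (y := y) hx
  have h3 := dir1 hX ((1:ℝ),(0:ℝ)) (y := y) hx
  have h4 : HasDerivAt (fun t => hh X (t, y))
      (fderiv ℝ (fun r => fderiv ℝ X r (1,0)) (x,y) (1,0) +
        ((-(2 * y) / x ^ 2) * fderiv ℝ X (x, y) (0,1) +
          (2 * y / x) * fderiv ℝ (fun r => fderiv ℝ X r (0,1)) (x,y) (1,0))) x := by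
    simpa [hh] using h3.fun_add (h1.fun_mul h2)
  have hsym := symm_second hX (show (x,y) ∈ U from hx) ((1:ℝ),(0:ℝ)) ((0:ℝ),(1:ℝ))
  have hpde := hXpde x y hx
  convert h4 using 1
  rw [← hsym] at hpde
  simp only [kk]
  linear_combination -hpde

include hp in
lemma contOn_derivp_fst :
    ContinuousOn (fun q : ℝ × ℝ => deriv p q.1) U := by
  have h1 : ContinuousOn (deriv p) (Set.Ioi 0) :=
    hp.continuousOn_deriv_of_isOpen isOpen_Ioi (by norm_num)
  exact h1.comp continuous_fst.continuousOn (fun q hq => hq)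

include hX in
lemma contOn_hh : ContinuousOn (hh X) U := by
  apply ((Xcomp_continuousOn hX (1,0)).add _)
  apply ContinuousOn.mul _ (Xcomp_continuousOn hX (0,1))
  exact (continuousOn_const.mul continuous_snd.continuousOn).div
    continuous_fst.continuousOn (fun q hq => ne_of_gt hq)

include hp hX in
lemma contOn_gg : ContinuousOn (gg p X) U := by
  apply ContinuousOn.mul _ (Xcomp_continuousOn hX (0,1))
  apply (contOn_derivp_fst hp).sub
  exact ((continuous_snd.pow 2).continuousOn).div
    ((continuous_fst.pow 2).continuousOn) (fun q hq => by have : (0:ℝ) < q.1 := hq; positivity)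

include hX in
lemma contOn_snd_fderiv (c u : ℝ × ℝ) :
    ContinuousOn (fun q => fderiv ℝ (fun r => fderiv ℝ X r c) q u) U := by
  have h1 : ContDiffOn ℝ (0 + 1) (fun q => fderiv ℝ X q c) U := by
    simpa using Xcomp_contDiffOn hX c
  have h2 := ((contDiffOn_succ_iff_fderiv_of_isOpen U_open).1 h1).2.2
  rw [contDiffOn_zero] at h2
  exact h2.clm_apply continuousOn_const

include hp hX in
lemma contOn_kk : ContinuousOn (kk p X) U := by
  apply ContinuousOn.add
  · apply ContinuousOn.mul _ (Xcomp_continuousOn hX (0,1))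
    apply ContinuousOn.neg
    exact (continuousOn_const.mul continuous_snd.continuousOn).div
      ((continuous_fst.pow 2).continuousOn) (fun q hq => by have : (0:ℝ) < q.1 := hq; positivity)
  · apply ContinuousOn.mul
    · apply (contOn_derivp_fst hp).sub
      exact ((continuous_snd.pow 2).continuousOn).div
        ((continuous_fst.pow 2).continuousOn) (fun q hq => by have : (0:ℝ) < q.1 := hq; positivity)
    · exact contOn_snd_fderiv hX (0,1) (0,1)

include hX in
lemma cont_hh_slice {a : ℝ} (ha : 0 < a) : Continuous (fun s => hh X (a, s)) :=
  (contOn_hh hX).comp_continuous (continuous_const.prodMk continuous_id) (fun _ => ha)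

include hp hX in
lemma cont_kk_slice {a : ℝ} (ha : 0 < a) : Continuous (fun s => kk p X (a, s)) :=
  (contOn_kk hp hX).comp_continuous (continuous_const.prodMk continuous_id) (fun _ => ha)

include hp hX in
lemma cont_gg0 : ContinuousOn (fun t => gg p X (t, 0)) (Set.Ioi 0) :=
  (contOn_gg hp hX).comp (continuous_id.prodMk continuous_const).continuousOn
    (fun t ht => ht)

include hp hX in
lemma hW2 {a₀ : ℝ} (ha₀ : 0 < a₀) :
    HasDerivAt (fun a => ∫ t in (1:ℝ)..a, gg p X (t, 0)) (gg p X (a₀, 0)) a₀ := by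
  have hsub : Set.uIcc (1:ℝ) a₀ ⊆ Set.Ioi 0 := by
    intro t ht
    rcases Set.mem_uIcc.mp ht with ⟨h1, _⟩ | ⟨h1, _⟩ <;> simp only [Set.mem_Ioi] <;> linarith
  refine intervalIntegral.integral_hasDerivAt_right
    (((cont_gg0 hp hX).mono hsub).intervalIntegrable)
    ((cont_gg0 hp hX).stronglyMeasurableAtFilter isOpen_Ioi a₀ ha₀)
    (((cont_gg0 hp hX).continuousAt (isOpen_Ioi.mem_nhds ha₀)))

include hp hX in
lemma hW1 (hXpde : ∀ x y : ℝ, 0 < x →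
      fderiv ℝ (fun q => fderiv ℝ X q (1, 0)) (x, y) (1, 0)
        + (2 * y / x) * fderiv ℝ (fun q => fderiv ℝ X q (1, 0)) (x, y) (0, 1)
        + ((y / x) ^ 2 - deriv p x) *
            fderiv ℝ (fun q => fderiv ℝ X q (0, 1)) (x, y) (0, 1) = 0)
    {a₀ b₀ : ℝ} (ha₀ : 0 < a₀) :
    HasDerivAt (fun a => ∫ s in (0:ℝ)..b₀, hh X (a, s))
      (gg p X (a₀, b₀) - gg p X (a₀, 0)) a₀ := by
  have hKc : IsCompact ((Set.Icc (a₀/2) (3*a₀/2)) ×ˢ Set.uIcc 0 b₀) :=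
    isCompact_Icc.prod isCompact_uIcc
  have hKU : ((Set.Icc (a₀/2) (3*a₀/2)) ×ˢ Set.uIcc 0 b₀) ⊆ U := by
    intro q hq
    have h1 := hq.1.1
    show (0:ℝ) < q.1
    linarith
  obtain ⟨M, hM⟩ := hKc.exists_bound_of_continuousOn ((contOn_kk hp hX).mono hKU)
  have hball : ∀ a ∈ Metric.ball a₀ (a₀/2), a ∈ Set.Icc (a₀/2) (3*a₀/2) := by
    intro a ha
    have := Metric.mem_ball.mp ha
    rw [Real.dist_eq, abs_lt] at this
    constructor <;> linarith [this.1, this.2]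
  have key := intervalIntegral.hasDerivAt_integral_of_dominated_loc_of_deriv_le
    (F := fun a s => hh X (a, s)) (F' := fun a s => kk p X (a, s))
    (bound := fun _ => M) (a := (0:ℝ)) (b := b₀) (x₀ := a₀) (s := Metric.ball a₀ (a₀/2))
    (μ := MeasureTheory.volume)
    (Metric.ball_mem_nhds _ (by positivity))
    (by
      filter_upwards [isOpen_Ioi.mem_nhds (Set.mem_Ioi.mpr ha₀)] with a ha
      exact (cont_hh_slice hX ha).aestronglyMeasurable)
    ((cont_hh_slice hX ha₀).intervalIntegrable 0 b₀)
    ((cont_kk_slice hp hX ha₀).aestronglyMeasurable)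
    (by
      refine Filter.Eventually.of_forall (fun s hs a ha => ?_)
      exact hM (a, s) ⟨hball a ha, Set.uIoc_subset_uIcc hs⟩)
    (intervalIntegrable_const)
    (by
      refine Filter.Eventually.of_forall (fun s hs a ha => ?_)
      have ha' : 0 < a := by
        have := (hball a ha).1; linarith
      exact hh_hasDerivAt_fst hX hXpde ha')
  have h2 := key.2
  have h3 : (∫ s in (0:ℝ)..b₀, kk p X (a₀, s)) = gg p X (a₀, b₀) - gg p X (a₀, 0) := by
    refine intervalIntegral.integral_eq_sub_of_hasDerivAt
      (fun s _ => gg_hasDerivAt_snd hX ha₀) ?_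
    exact (cont_kk_slice hp hX ha₀).intervalIntegrable 0 b₀
  rwa [h3] at h2

include hX in
lemma hP2a {a₀ b₀ : ℝ} (ha₀ : 0 < a₀) :
    HasDerivAt (fun b => ∫ s in b₀..b, hh X (a₀, s)) (hh X (a₀, b₀)) b₀ :=
  intervalIntegral.integral_hasDerivAt_right
    ((cont_hh_slice hX ha₀).intervalIntegrable (μ := MeasureTheory.volume) b₀ b₀)
    ((cont_hh_slice hX ha₀).stronglyMeasurable.stronglyMeasurableAtFilter)
    (cont_hh_slice hX ha₀).continuousAt

include hX in
lemma hR {q₀ : ℝ × ℝ} (hq₀ : q₀ ∈ U) :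
    HasFDerivAt (fun q : ℝ × ℝ => ∫ s in q₀.2..q.2, (hh X (q.1, s) - hh X (q₀.1, s)))
      (0 : ℝ × ℝ →L[ℝ] ℝ) q₀ := by
  rw [hasFDerivAt_iff_isLittleO_nhds_zero]
  rw [Asymptotics.isLittleO_iff]
  intro c hc
  have hcont : ContinuousAt (hh X) q₀ := (contOn_hh hX).continuousAt (U_open.mem_nhds hq₀)
  obtain ⟨δ₁, hδ₁, hball₁⟩ := Metric.continuousAt_iff.mp hcont (c/2) (by positivity)
  obtain ⟨δ₂, hδ₂, hball₂⟩ := Metric.isOpen_iff.mp U_open q₀ hq₀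
  set δ := min δ₁ δ₂ with hδdef
  have hδ : 0 < δ := lt_min hδ₁ hδ₂
  filter_upwards [Metric.ball_mem_nhds (0 : ℝ × ℝ) (by positivity : 0 < δ/2)] with z hz
  have hz' : dist z 0 < δ/2 := Metric.mem_ball.mp hz
  have hz1 : |z.1| < δ/2 := by
    calc |z.1| = dist z.1 0 := by rw [Real.dist_eq, sub_zero]
    _ ≤ dist z (0 : ℝ × ℝ) := by rw [Prod.dist_eq]; exact le_max_left _ _
    _ < δ/2 := hz'
  have hz2 : |z.2| < δ/2 := by
    calc |z.2| = dist z.2 0 := by rw [Real.dist_eq, sub_zero]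
    _ ≤ dist z (0 : ℝ × ℝ) := by rw [Prod.dist_eq]; exact le_max_right _ _
    _ < δ/2 := hz'
  have hbound : ∀ s ∈ Set.uIoc q₀.2 (q₀ + z).2,
      ‖hh X ((q₀ + z).1, s) - hh X (q₀.1, s)‖ ≤ c := by
    intro s hs
    have hsb : |s - q₀.2| ≤ |z.2| := by
      have h1 : (q₀ + z).2 = q₀.2 + z.2 := rfl
      rw [abs_le]
      have e1 := le_abs_self z.2
      have e2 := neg_abs_le z.2
      rcases Set.mem_uIoc.mp hs with ⟨h2, h3⟩ | ⟨h2, h3⟩ <;> rw [h1] at * <;>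
        constructor <;> linarith
    have hmem : ∀ t : ℝ, |t - q₀.1| < δ → dist ((t, s) : ℝ × ℝ) q₀ < δ := by
      intro t ht
      rw [Prod.dist_eq]
      apply max_lt ht
      rw [Real.dist_eq]
      calc |s - q₀.2| ≤ |z.2| := hsb
      _ < δ/2 := hz2
      _ < δ := by linarith
    have hd1 : dist (((q₀ + z).1, s) : ℝ × ℝ) q₀ < δ := by
      apply hmem
      have h : (q₀ + z).1 - q₀.1 = z.1 := by simp
      rw [h]
      linarith
    have hd2 : dist ((q₀.1, s) : ℝ × ℝ) q₀ < δ := by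
      apply hmem
      simp only [sub_self, abs_zero]
      exact hδ
    have hb1 := hball₁ (lt_of_lt_of_le hd1 (min_le_left _ _))
    have hb2 := hball₁ (lt_of_lt_of_le hd2 (min_le_left _ _))
    rw [Real.dist_eq] at hb1 hb2
    rw [Real.norm_eq_abs]
    calc |hh X ((q₀ + z).1, s) - hh X (q₀.1, s)|
        ≤ |hh X ((q₀ + z).1, s) - hh X q₀| + |hh X q₀ - hh X (q₀.1, s)| := abs_sub_le _ _ _
    _ ≤ c/2 + c/2 := by
        apply add_le_add hb1.le
        rw [abs_sub_comm]; exact hb2.le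
    _ = c := by ring
  calc ‖(fun q : ℝ × ℝ => ∫ s in q₀.2..q.2, (hh X (q.1, s) - hh X (q₀.1, s))) (q₀ + z)
        - (fun q : ℝ × ℝ => ∫ s in q₀.2..q.2, (hh X (q.1, s) - hh X (q₀.1, s))) q₀
        - (0 : ℝ × ℝ →L[ℝ] ℝ) z‖
      = ‖∫ s in q₀.2..(q₀ + z).2, (hh X ((q₀ + z).1, s) - hh X (q₀.1, s))‖ := by
        simp [intervalIntegral.integral_same]
    _ ≤ c * |(q₀ + z).2 - q₀.2| := intervalIntegral.norm_integral_le_of_norm_le_const hbound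
    _ ≤ c * ‖z‖ := by
        apply mul_le_mul_of_nonneg_left _ hc.le
        have : (q₀ + z).2 - q₀.2 = z.2 := by simp
        rw [this]
        calc |z.2| ≤ max |z.1| |z.2| := le_max_right _ _
        _ = ‖z‖ := rfl

include hp hX in
lemma WW_hasFDerivAt (hXpde : ∀ x y : ℝ, 0 < x →
      fderiv ℝ (fun q => fderiv ℝ X q (1, 0)) (x, y) (1, 0)
        + (2 * y / x) * fderiv ℝ (fun q => fderiv ℝ X q (1, 0)) (x, y) (0, 1)
        + ((y / x) ^ 2 - deriv p x) *
            fderiv ℝ (fun q => fderiv ℝ X q (0, 1)) (x, y) (0, 1) = 0)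
    {q₀ : ℝ × ℝ} (hq₀ : q₀ ∈ U) :
    HasFDerivAt (WW p X)
      (gg p X q₀ • ContinuousLinearMap.fst ℝ ℝ ℝ +
        hh X q₀ • ContinuousLinearMap.snd ℝ ℝ ℝ) q₀ := by
  have ha₀ : (0:ℝ) < q₀.1 := hq₀
  have h1 : HasFDerivAt (fun q : ℝ × ℝ => ∫ s in (0:ℝ)..q₀.2, hh X (q.1, s))
      ((gg p X (q₀.1, q₀.2) - gg p X (q₀.1, 0)) • ContinuousLinearMap.fst ℝ ℝ ℝ) q₀ :=
    (hW1 hp hX hXpde ha₀).comp_hasFDerivAt q₀ hasFDerivAt_fst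
  have h2 : HasFDerivAt (fun q : ℝ × ℝ => ∫ t in (1:ℝ)..q.1, gg p X (t, 0))
      (gg p X (q₀.1, 0) • ContinuousLinearMap.fst ℝ ℝ ℝ) q₀ :=
    (hW2 hp hX ha₀).comp_hasFDerivAt q₀ hasFDerivAt_fst
  have h3 : HasFDerivAt (fun q : ℝ × ℝ => ∫ s in q₀.2..q.2, hh X (q₀.1, s))
      (hh X (q₀.1, q₀.2) • ContinuousLinearMap.snd ℝ ℝ ℝ) q₀ :=
    (hP2a hX ha₀).comp_hasFDerivAt q₀ hasFDerivAt_snd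
  have h4 := hR hX hq₀
  have hsum := (h1.fun_add (h3.fun_add h4)).fun_add h2
  have hD : ((gg p X (q₀.1, q₀.2) - gg p X (q₀.1, 0)) • ContinuousLinearMap.fst ℝ ℝ ℝ +
        (hh X (q₀.1, q₀.2) • ContinuousLinearMap.snd ℝ ℝ ℝ + 0)) +
        gg p X (q₀.1, 0) • ContinuousLinearMap.fst ℝ ℝ ℝ =
      gg p X q₀ • ContinuousLinearMap.fst ℝ ℝ ℝ +
        hh X q₀ • ContinuousLinearMap.snd ℝ ℝ ℝ := by
    ext z <;> simp <;> ring
  rw [hD] at hsum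
  apply hsum.congr_of_eventuallyEq
  filter_upwards [U_open.mem_nhds hq₀] with q hq
  have hq1 : (0:ℝ) < q.1 := hq
  have i1 := cont_hh_slice hX hq1
  have i2 := cont_hh_slice hX ha₀
  show WW p X q = _
  simp only [WW]
  rw [intervalIntegral.integral_sub (i1.intervalIntegrable _ _) (i2.intervalIntegrable _ _),
    ← intervalIntegral.integral_add_adjacent_intervals
      (i1.intervalIntegrable (0:ℝ) q₀.2) (i1.intervalIntegrable q₀.2 q.2)]
  ring

include hp hX in
lemma WW_contDiffOn (hXpde : ∀ x y : ℝ, 0 < x →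
      fderiv ℝ (fun q => fderiv ℝ X q (1, 0)) (x, y) (1, 0)
        + (2 * y / x) * fderiv ℝ (fun q => fderiv ℝ X q (1, 0)) (x, y) (0, 1)
        + ((y / x) ^ 2 - deriv p x) *
            fderiv ℝ (fun q => fderiv ℝ X q (0, 1)) (x, y) (0, 1) = 0) :
    ContDiffOn ℝ 1 (WW p X) U := by
  have h1 : ContDiffOn ℝ (0 + 1) (WW p X) U := by
    rw [contDiffOn_succ_iff_fderiv_of_isOpen U_open]
    refine ⟨fun q hq => (WW_hasFDerivAt hp hX hXpde hq).differentiableAt.differentiableWithinAt,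
      by simp, ?_⟩
    rw [contDiffOn_zero]
    have : ContinuousOn (fun q => gg p X q • ContinuousLinearMap.fst ℝ ℝ ℝ +
        hh X q • ContinuousLinearMap.snd ℝ ℝ ℝ) U :=
      ((contOn_gg hp hX).smul continuousOn_const).add
        ((contOn_hh hX).smul continuousOn_const)
    exact this.congr (fun q hq => (WW_hasFDerivAt hp hX hXpde hq).fderiv)
  simpa using h1

noncomputable def QQ (p : ℝ → ℝ) (X : ℝ × ℝ → ℝ) (u : ℝ × ℝ × ℝ) : ℝ :=
  -(u.2.1 / u.2.2) * X (u.2.2 / u.1, u.2.1 / u.1) + WW p X (u.2.2 / u.1, u.2.1 / u.1)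

lemma clm_pair_apply (L : ℝ × ℝ →L[ℝ] ℝ) (s t : ℝ) :
    L (s, t) = s * L (1, 0) + t * L (0, 1) := by
  have h : ((s, t) : ℝ × ℝ) = s • ((1:ℝ), (0:ℝ)) + t • ((0:ℝ), (1:ℝ)) := by
    simp [Prod.ext_iff]
  rw [h, map_add, map_smul, map_smul, smul_eq_mul, smul_eq_mul]

lemma hasFDerivAt_div_clm {c d : ℝ × ℝ → ℝ} {q : ℝ × ℝ}
    (hc : DifferentiableAt ℝ c q) (hd : DifferentiableAt ℝ d q) (h0 : d q ≠ 0) :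
    HasFDerivAt (fun r => c r / d r)
      ((d q)⁻¹ • fderiv ℝ c q - (c q / (d q) ^ 2) • fderiv ℝ d q) q := by
  have h1 := (hasDerivAt_inv h0).comp_hasFDerivAt q hd.hasFDerivAt
  have h2 := hc.hasFDerivAt.mul h1
  have h3 : HasFDerivAt (fun r => c r / d r)
      (c q • (-((d q) ^ 2)⁻¹ • fderiv ℝ d q) + (d q)⁻¹ • fderiv ℝ c q) q :=
    h2.congr_of_eventuallyEq (Filter.Eventually.of_forall (fun r => div_eq_mul_inv (c r) (d r)))
  have he : (d q)⁻¹ • fderiv ℝ c q - (c q / (d q) ^ 2) • fderiv ℝ d q =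
      c q • (-((d q) ^ 2)⁻¹ • fderiv ℝ d q) + (d q)⁻¹ • fderiv ℝ c q := by
    refine ContinuousLinearMap.ext fun z => ?_
    simp only [ContinuousLinearMap.add_apply, ContinuousLinearMap.sub_apply,
      ContinuousLinearMap.smul_apply, smul_eq_mul]
    field_simp
    ring
  rw [he]
  exact h3

end main
end PPF

/-- If `X` solves `X_xx + (2y/x)·X_xy + ((y/x)² − p'(x))·X_yy = 0` on
`(0,∞) × ℝ`, then there is a `C¹` flux `Q̃` on `{η > 0, v > 0}` such that every `C¹`
solution `(η,w,v)` of the particle-path system `η_t − (w/v)_x = 0`, `w_t + (p(v/η))_x = 0`,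
`v_t = 0` on an open `Ω ⊆ ℝ²` satisfies `∂_t[η·X(v/η, w/η)] + ∂_x[Q̃(η,w,v)] = 0`. -/
theorem exists_flux_for_particle_path_extension (p : ℝ → ℝ)
    (hp : ContDiffOn ℝ 2 p (Set.Ioi 0))
    (X : ℝ × ℝ → ℝ)
    (hX : ContDiffOn ℝ 2 X (Set.Ioi 0 ×ˢ (Set.univ : Set ℝ)))
    (hXpde : ∀ x y : ℝ, 0 < x →
      fderiv ℝ (fun q => fderiv ℝ X q (1, 0)) (x, y) (1, 0)
        + (2 * y / x) * fderiv ℝ (fun q => fderiv ℝ X q (1, 0)) (x, y) (0, 1)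
        + ((y / x) ^ 2 - deriv p x) *
            fderiv ℝ (fun q => fderiv ℝ X q (0, 1)) (x, y) (0, 1) = 0) :
    ∃ Qt : ℝ × ℝ × ℝ → ℝ,
      ContDiffOn ℝ 1 Qt {q : ℝ × ℝ × ℝ | 0 < q.1 ∧ 0 < q.2.2} ∧
      ∀ (Ω : Set (ℝ × ℝ)), IsOpen Ω →
        ∀ η w v : ℝ × ℝ → ℝ,
          ContDiffOn ℝ 1 η Ω → ContDiffOn ℝ 1 w Ω → ContDiffOn ℝ 1 v Ω →
          (∀ q ∈ Ω, 0 < η q ∧ 0 < v q) →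
          (∀ q ∈ Ω, fderiv ℝ η q (0, 1) - fderiv ℝ (fun r => w r / v r) q (1, 0) = 0) →
          (∀ q ∈ Ω, fderiv ℝ w q (0, 1) + fderiv ℝ (fun r => p (v r / η r)) q (1, 0) = 0) →
          (∀ q ∈ Ω, fderiv ℝ v q (0, 1) = 0) →
          ∀ q ∈ Ω,
            fderiv ℝ (fun r => η r * X (v r / η r, w r / η r)) q (0, 1)
              + fderiv ℝ (fun r => Qt (η r, w r, v r)) q (1, 0) = 0 := by
  classical
  refine ⟨PPF.QQ p X, ?_, ?_⟩
  · -- C¹ regularity of the flux on the domain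
    set D : Set (ℝ × ℝ × ℝ) := {q : ℝ × ℝ × ℝ | 0 < q.1 ∧ 0 < q.2.2} with hD
    have hinner : ContDiffOn ℝ 1 (fun u : ℝ × ℝ × ℝ => ((u.2.2 / u.1, u.2.1 / u.1) : ℝ × ℝ)) D := by
      apply ContDiffOn.prodMk
      · exact ContDiffOn.div ((contDiff_snd.comp contDiff_snd).contDiffOn)
          (contDiff_fst.contDiffOn) (fun u hu => ne_of_gt hu.1)
      · exact ContDiffOn.div ((contDiff_fst.comp contDiff_snd).contDiffOn)
          (contDiff_fst.contDiffOn) (fun u hu => ne_of_gt hu.1)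
    have hmaps : Set.MapsTo (fun u : ℝ × ℝ × ℝ => ((u.2.2 / u.1, u.2.1 / u.1) : ℝ × ℝ)) D PPF.U :=
      fun u hu => div_pos hu.2 hu.1
    have hXc : ContDiffOn ℝ 1 (fun u : ℝ × ℝ × ℝ => X (u.2.2 / u.1, u.2.1 / u.1)) D :=
      ((PPF.hXU hX).of_le one_le_two).comp hinner hmaps
    have hfrac : ContDiffOn ℝ 1 (fun u : ℝ × ℝ × ℝ => -(u.2.1 / u.2.2)) D := by
      apply ContDiffOn.neg
      exact ContDiffOn.div ((contDiff_fst.comp contDiff_snd).contDiffOn)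
        ((contDiff_snd.comp contDiff_snd).contDiffOn) (fun u hu => ne_of_gt hu.2)
    have hWc : ContDiffOn ℝ 1 (fun u : ℝ × ℝ × ℝ => PPF.WW p X (u.2.2 / u.1, u.2.1 / u.1)) D :=
      (PPF.WW_contDiffOn hp hX hXpde).comp hinner hmaps
    exact (hfrac.mul hXc).add hWc
  · intro Ω hΩ η w v hη hw hv hpos heq1 heq2 heq3 q hq
    obtain ⟨hE, hV⟩ := hpos q hq
    have hmem : Ω ∈ nhds q := hΩ.mem_nhds hq
    have hηd : DifferentiableAt ℝ η q := ((hη q hq).contDiffAt hmem).differentiableAt one_ne_zero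
    have hwd : DifferentiableAt ℝ w q := ((hw q hq).contDiffAt hmem).differentiableAt one_ne_zero
    have hvd : DifferentiableAt ℝ v q := ((hv q hq).contDiffAt hmem).differentiableAt one_ne_zero
    have hEne : η q ≠ 0 := ne_of_gt hE
    have hVne : v q ≠ 0 := ne_of_gt hV
    have ha : 0 < v q / η q := div_pos hV hE
    have habU : ((v q / η q, w q / η q) : ℝ × ℝ) ∈ PPF.U := ha
    have hA := PPF.hasFDerivAt_div_clm hvd hηd hEne
    have hB := PPF.hasFDerivAt_div_clm hwd hηd hEne
    have hAB := hA.prodMk hB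
    have hXdiff : DifferentiableAt ℝ X (v q / η q, w q / η q) :=
      (((PPF.hXU hX) _ habU).contDiffAt (PPF.U_open.mem_nhds habU)).differentiableAt two_ne_zero
    have hXcomp := hXdiff.hasFDerivAt.comp q hAB
    have hT1 : HasFDerivAt (fun r => η r * X (v r / η r, w r / η r)) _ q :=
      hηd.hasFDerivAt.mul hXcomp
    have hWd := PPF.WW_hasFDerivAt hp hX hXpde habU
    have hWcomp := hWd.comp q hAB
    have hwv := PPF.hasFDerivAt_div_clm hwd hvd hVne
    have hQ : HasFDerivAt (fun r => PPF.QQ p X (η r, w r, v r)) _ q :=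
      ((hwv.fun_neg).mul hXcomp).add hWcomp
    have hpderiv : HasDerivAt p (deriv p (v q / η q)) (v q / η q) :=
      (((hp _ ha).contDiffAt (isOpen_Ioi.mem_nhds ha)).differentiableAt two_ne_zero).hasDerivAt
    have hPA : HasFDerivAt (fun r => p (v r / η r)) _ q := hpderiv.comp_hasFDerivAt q hA
    rw [hT1.fderiv, hQ.fderiv]
    have e1 := heq1 q hq
    have e2 := heq2 q hq
    have e3 := heq3 q hq
    rw [hwv.fderiv] at e1
    rw [hPA.fderiv] at e2
    obtain ⟨X1, hX1⟩ : ∃ a, a = fderiv ℝ X (v q / η q, w q / η q) (1, 0) := ⟨_, rfl⟩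
    obtain ⟨X2, hX2⟩ : ∃ a, a = fderiv ℝ X (v q / η q, w q / η q) (0, 1) := ⟨_, rfl⟩
    have expand : ∀ s t : ℝ, fderiv ℝ X (v q / η q, w q / η q) (s, t) = s * X1 + t * X2 := by
      intro s t
      rw [hX1, hX2]
      exact PPF.clm_pair_apply _ s t
    simp only [ContinuousLinearMap.add_apply, ContinuousLinearMap.sub_apply,
      ContinuousLinearMap.smul_apply, ContinuousLinearMap.neg_apply,
      ContinuousLinearMap.comp_apply, ContinuousLinearMap.prod_apply,
      ContinuousLinearMap.coe_fst', ContinuousLinearMap.coe_snd',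
      Function.comp_apply, smul_eq_mul, PPF.gg, PPF.hh, expand] at e1 e2 ⊢
    have het : (fderiv ℝ η q) (0, 1) =
        (v q)⁻¹ * (fderiv ℝ w q) (1, 0) - w q / v q ^ 2 * (fderiv ℝ v q) (1, 0) := by linarith
    have hwt : (fderiv ℝ w q) (0, 1) =
        -(deriv p (v q / η q) *
          ((η q)⁻¹ * (fderiv ℝ v q) (1, 0) - v q / η q ^ 2 * (fderiv ℝ η q) (1, 0))) := by
      linarith
    rw [het, hwt, e3]
    field_simp
    ring
end

section
/- Let p : (0,∞) → ℝ be continuous; let ρ₀, u₀ : ℝ → ℝ be bounded measurable with ρ₀ ≥ c₀ > 0; let η, w, v : ℝ × [0,∞) → ℝ be bounded measurable with c₁ ≤ η ≤ c₂ and c₁ ≤ v ≤ c₂ (0 < c₁ ≤ c₂) and form a weak solution of η_t − (w/v)_x = 0, w_t + (p(v/η))_x = 0, v_t = 0 with initial data (1, ρ₀u₀, ρ₀); and let γ : ℝ × [0,∞) → ℝ be locally Lipschitz with γ(x,0) = x, ∂γ/∂x = η and ∂γ/∂t = w/v almost everywhere, so that each γ(·,t) is a bi-Lipschitz homeomorphism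 of ℝ. Set ρ(x,t) := (v/η)(γ⁻¹(x,t),t) and u(x,t) := (w/v)(γ⁻¹(x,t),t). Let X, Q : (0,∞) × ℝ → ℝ be continuous. If for every nonnegative compactly supported Lipschitz function φ̃ on ℝ × (0,∞) one has ∬ [ ∂_tφ̃·η·X(v/η, w/η) + ∂_xφ̃·( Q(v/η, w/η) − (w/v)·X(v/η, w/η) ) ] dx dt ≥ 0, then for every nonnegative φ ∈ C_c^∞(ℝ × (0,∞)) one has ∬ [ φ_t·X(ρ, ρu) + φ_x·Q(ρ, ρu) ] dx dt ≥ 0. -/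
open MeasureTheory Set Function


/-- A locally Lipschitz function is Lipschitz on every compact set. -/
lemma LocallyLipschitz.exists_lipschitzOnWith {α β : Type*} [MetricSpace α] [MetricSpace β]
    {f : α → β} (hf : LocallyLipschitz f) {s : Set α} (hs : IsCompact s) :
    ∃ K : NNReal, LipschitzOnWith K f s := by
  rcases s.eq_empty_or_nonempty with rfl | hne
  · exact ⟨1, by simp⟩
  obtain ⟨M, hM⟩ : ∃ M, ∀ x ∈ f '' s, ∀ y ∈ f '' s, dist x y ≤ M := by
    have : Bornology.IsBounded (f '' s) := (hs.image hf.continuous).isBounded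
    exact Metric.isBounded_iff.1 this |>.imp fun C hC => fun x hx y hy => hC hx hy
  choose K t ht hK using hf
  choose r hr hball using fun x => Metric.mem_nhds_iff.1 (ht x)
  obtain ⟨I, hIc, hcov⟩ := hs.elim_nhds_subcover (fun x => Metric.ball x (r x / 2))
    (fun x _ => Metric.ball_mem_nhds x (div_pos (hr x) two_pos))
  rcases I.eq_empty_or_nonempty with rfl | hIne
  · simp only [Finset.notMem_empty, iUnion_of_empty, iUnion_empty] at hcov
    obtain ⟨x, hx⟩ := hne
    exact absurd (hcov hx) (by simp)
  set δ : ℝ := I.inf' hIne fun x => r x / 2 with hδdef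
  have hδpos : 0 < δ := by
    rw [hδdef, Finset.lt_inf'_iff]
    exact fun x _ => div_pos (hr x) two_pos
  set L : ℝ := I.sup' hIne fun x => (K x : ℝ) with hLdef
  have hM0 : 0 ≤ M := by
    obtain ⟨x, hx⟩ := hne
    have := hM _ ⟨x, hx, rfl⟩ _ ⟨x, hx, rfl⟩
    simpa using le_trans dist_nonneg this
  refine ⟨(max L (M / δ)).toNNReal, LipschitzOnWith.of_dist_le' ?_⟩
  intro x hx y hy
  rcases le_or_gt (dist x y) δ with hd | hd
  · -- close points: use a local Lipschitz bound
    obtain ⟨i, hiI, hxi⟩ : ∃ i ∈ I, x ∈ Metric.ball i (r i / 2) := by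
      have := hcov hx
      simpa using this
    have hxt : x ∈ t i := hball i (Metric.mem_ball.2
      (by have := Metric.mem_ball.1 hxi; linarith [hr i]))
    have hyt : y ∈ t i := by
      apply hball i
      have h1 : dist y i ≤ dist y x + dist x i := dist_triangle y x i
      have h2 : dist x i < r i / 2 := hxi
      have h3 : dist y x ≤ δ := by rwa [dist_comm]
      have h4 : δ ≤ r i / 2 := Finset.inf'_le _ hiI
      exact Metric.mem_ball.2 (by linarith)
    calc dist (f x) (f y) ≤ (K i : ℝ) * dist x y := (lipschitzOnWith_iff_dist_le_mul.1 (hK i)) x hxt y hyt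
      _ ≤ max L (M / δ) * dist x y := by
          apply mul_le_mul_of_nonneg_right _ dist_nonneg
          exact le_trans (Finset.le_sup' (fun x => (K x : ℝ)) hiI) (le_max_left _ _)
  · -- far points: use the diameter bound
    calc dist (f x) (f y) ≤ M := hM _ ⟨x, hx, rfl⟩ _ ⟨y, hy, rfl⟩
      _ = (M / δ) * δ := by field_simp
      _ ≤ max L (M / δ) * dist x y := by
          apply mul_le_mul (le_max_right _ _) hd.le hδpos.le
          exact le_trans (div_nonneg hM0 hδpos.le) (le_max_right _ _)

/-- Gluing: a function Lipschitz on a set, vanishing outside a subset at positive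
distance from the complement, and globally bounded, is globally Lipschitz. -/
lemma lipschitzWith_of_lipschitzOnWith_of_support {α : Type*} [MetricSpace α]
    {f : α → ℝ} {K : NNReal} {s s' : Set α} (hK : LipschitzOnWith K f s)
    (h0 : ∀ q, q ∉ s' → f q = 0) (M δ : ℝ)
    (hMf : ∀ q, |f q| ≤ M) (hδ : 0 < δ)
    (hdist : ∀ q, q ∉ s → ∀ q' ∈ s', δ ≤ dist q q') :
    ∃ K' : NNReal, LipschitzWith K' f := by
  refine ⟨(max (K : ℝ) (M / δ)).toNNReal, LipschitzWith.of_dist_le' ?_⟩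
  have key : ∀ x y : α, x ∉ s → dist (f x) (f y) ≤ max (K : ℝ) (M / δ) * dist x y := by
    intro x y hx
    have hfx : f x = 0 := h0 x (fun h => hx (by
      by_contra hxs
      exact hxs (absurd (hdist x hxs x h) (by simpa using hδ))))
    by_cases hy : y ∈ s'
    · have h1 : δ ≤ dist x y := hdist x hx y hy
      have h2 : dist (f x) (f y) ≤ M := by
        rw [hfx, Real.dist_eq, zero_sub, abs_neg]; exact hMf y
      have hM0 : 0 ≤ M := le_trans (abs_nonneg _) (hMf y)
      calc dist (f x) (f y) ≤ M := h2
        _ = (M / δ) * δ := by field_simp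
        _ ≤ max (K : ℝ) (M / δ) * dist x y :=
            mul_le_mul (le_max_right _ _) h1 hδ.le
              (le_trans (div_nonneg hM0 hδ.le) (le_max_right _ _))
    · have hfy : f y = 0 := h0 y hy
      simp only [hfx, hfy, dist_self]
      positivity
  intro x y
  by_cases hx : x ∈ s
  · by_cases hy : y ∈ s
    · calc dist (f x) (f y) ≤ (K : ℝ) * dist x y :=
          lipschitzOnWith_iff_dist_le_mul.1 hK x hx y hy
        _ ≤ max (K : ℝ) (M / δ) * dist x y :=
          mul_le_mul_of_nonneg_right (le_max_left _ _) dist_nonneg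
    · rw [dist_comm, dist_comm x y]; exact key y x hy
  · exact key x y hx

/-- A locally Lipschitz self-map of the plane maps null sets to null sets. -/
lemma LocallyLipschitz.image_null {f : ℝ × ℝ → ℝ × ℝ} (hf : LocallyLipschitz f)
    {N : Set (ℝ × ℝ)} (hN : volume N = 0) : volume (f '' N) = 0 := by
  have hcover : f '' N ⊆ ⋃ n : ℕ, f '' (N ∩ Metric.closedBall 0 n) := by
    rintro - ⟨q, hq, rfl⟩
    obtain ⟨n, hn⟩ := exists_nat_ge (dist q 0)
    exact Set.mem_iUnion.2 ⟨n, ⟨q, ⟨hq, Metric.mem_closedBall.2 hn⟩, rfl⟩⟩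
  refine measure_mono_null hcover (measure_iUnion_null fun n => ?_)
  obtain ⟨K, hK⟩ := hf.exists_lipschitzOnWith (isCompact_closedBall (0 : ℝ × ℝ) n)
  have hK' : LipschitzOnWith K f (N ∩ Metric.closedBall 0 n) :=
    hK.mono Set.inter_subset_right
  have h2 : (0 : ℝ) ≤ 2 := by norm_num
  have := hK'.hausdorffMeasure_image_le h2
  rw [MeasureTheory.hausdorffMeasure_prod_real] at this
  refine le_antisymm (le_trans this ?_) zero_le
  rw [measure_mono_null Set.inter_subset_left hN]
  simp

/-- Determinant of a linear map of the plane given by its values on the basis. -/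
lemma det_eq_of_basis (L : ℝ × ℝ →L[ℝ] ℝ × ℝ) (a b : ℝ)
    (h1 : L (1, 0) = (a, 0)) (h2 : L (0, 1) = (b, 1)) :
    L.det = a := by
  show (L : ℝ × ℝ →ₗ[ℝ] ℝ × ℝ).det = a
  have := LinearMap.det_toMatrix (Module.Basis.finTwoProd ℝ) (L : ℝ × ℝ →ₗ[ℝ] ℝ × ℝ)
  rw [← this, Matrix.det_fin_two]
  simp [LinearMap.toMatrix_apply, h1, h2]

/-- Uniform growth of the particle path map: each slice expands distances by `c₁`. -/
lemma growth_of_slices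
    (γ η w v : ℝ × ℝ → ℝ) (hγ : LocallyLipschitz γ) (hηm : Measurable η)
    (c₁ c₂ : ℝ) (hc₁ : 0 < c₁)
    (hηbd : ∀ q : ℝ × ℝ, 0 ≤ q.2 → c₁ ≤ η q ∧ η q ≤ c₂)
    (hγd : ∀ᵐ q : ℝ × ℝ ∂volume, 0 < q.2 →
      HasDerivAt (fun x => γ (x, q.2)) (η q) q.1 ∧
      HasDerivAt (fun s => γ (q.1, s)) (w q / v q) q.2)
    (hbij : ∀ t : ℝ, 0 ≤ t →
      Function.Bijective (fun x => γ (x, t)) ∧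
      ∃ K₁ K₂ : NNReal, LipschitzWith K₁ (fun x => γ (x, t)) ∧
        LipschitzWith K₂ (Function.invFun (fun x => γ (x, t)))) :
    ∀ t : ℝ, 0 ≤ t → ∀ a b : ℝ, a ≤ b → c₁ * (b - a) ≤ |γ (b, t) - γ (a, t)| := by
  have hprod : (volume : Measure (ℝ × ℝ)) = (volume : Measure ℝ).prod volume := rfl
  have hswap : ∀ᵐ z : ℝ × ℝ ∂((volume : Measure ℝ).prod volume), 0 < z.1 →
      HasDerivAt (fun x => γ (x, z.1)) (η (z.2, z.1)) z.2 := by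
    have h1 : ∀ᵐ q : ℝ × ℝ ∂((volume : Measure ℝ).prod volume), 0 < q.2 →
        HasDerivAt (fun x => γ (x, q.2)) (η q) q.1 := by
      rw [← hprod]
      filter_upwards [hγd] with q hq h using (hq h).1
    have hmap : Measure.map Prod.swap ((volume : Measure ℝ).prod volume)
        = (volume : Measure ℝ).prod volume := Measure.prod_swap
    have := ae_of_ae_map (p := fun q : ℝ × ℝ => 0 < q.2 →
        HasDerivAt (fun x => γ (x, q.2)) (η q) q.1)
      (measurable_swap.aemeasurable) (hmap ▸ h1)
    filter_upwards [this] with z hz using hz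
  have hslice : ∀ᵐ t : ℝ ∂volume, ∀ᵐ x : ℝ ∂volume, 0 < t →
      HasDerivAt (fun y => γ (y, t)) (η (x, t)) x := by
    have := Measure.ae_ae_of_ae_prod hswap
    filter_upwards [this] with t ht
    filter_upwards [ht] with x hx using hx
  -- the slice inequality, for a.e. t
  have hae : ∀ᵐ t : ℝ ∂volume, ∀ a b : ℝ, a ≤ b → 0 < t →
      c₁ * (b - a) ≤ |γ (b, t) - γ (a, t)| := by
    filter_upwards [hslice] with t ht a b hab htpos
    set g : ℝ → ℝ := fun y => γ (y, t) with hgdef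
    obtain ⟨hgbij, K₁, K₂, hK₁, hK₂⟩ := hbij t htpos.le
    have ht' : ∀ᵐ x : ℝ ∂volume, HasDerivAt g (η (x, t)) x :=
      ht.mono fun x hx => hx htpos
    set N : Set ℝ := toMeasurable volume {x | ¬ HasDerivAt g (η (x, t)) x} with hNdef
    have hNnull : volume N = 0 := by
      rw [hNdef, measure_toMeasurable]
      exact ae_iff.1 ht'
    set s : Set ℝ := Set.Icc a b \ N with hsdef
    have hsm : MeasurableSet s := measurableSet_Icc.diff (measurableSet_toMeasurable _ _)
    have hders : ∀ x ∈ s, HasDerivWithinAt g (η (x, t)) s x := by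
      intro x hx
      have : HasDerivAt g (η (x, t)) x := by
        by_contra hcon
        exact hx.2 (subset_toMeasurable _ _ hcon)
      exact this.hasDerivWithinAt
    have hinj : Set.InjOn g s := hgbij.injective.injOn
    have hcov := integral_image_eq_integral_abs_deriv_smul hsm hders hinj (fun _ => (1 : ℝ))
    have hvols : volume s = volume (Set.Icc a b) := measure_diff_null hNnull
    -- bound the image by the interval between the endpoint values
    have himg : g '' s ⊆ Set.uIcc (g a) (g b) := by
      rintro - ⟨x, hx, rfl⟩
      have hxab : x ∈ Set.Icc a b := hx.1
      rcases Continuous.strictMono_of_inj hK₁.continuous hgbij.injective with hm | hm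
      · exact Set.mem_uIcc.2 (Or.inl ⟨hm.monotone hxab.1, hm.monotone hxab.2⟩)
      · exact Set.mem_uIcc.2 (Or.inr ⟨hm.antitone hxab.2, hm.antitone hxab.1⟩)
    -- left side of change of variables
    have hL : ∫ x in g '' s, (1 : ℝ) ≤ |g b - g a| := by
      rw [setIntegral_const]
      have h1 : volume (g '' s) ≤ volume (Set.uIcc (g a) (g b)) := measure_mono himg
      have h2 : volume (Set.uIcc (g a) (g b)) = ENNReal.ofReal |g b - g a| := by
        rw [Set.uIcc, Real.volume_Icc, max_sub_min_eq_abs, abs_sub_comm]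
      have h3 : (volume (g '' s)).toReal ≤ |g b - g a| := by
        refine le_trans (ENNReal.toReal_mono ?_ h1) ?_
        · rw [h2]; exact ENNReal.ofReal_ne_top
        · rw [h2, ENNReal.toReal_ofReal (abs_nonneg _)]
      simpa [measureReal_def] using h3
    -- right side of change of variables
    have hR : c₁ * (b - a) ≤ ∫ x in s, |η (x, t)| • (1 : ℝ) := by
      have hc₁' : ∀ x ∈ s, c₁ ≤ |η (x, t)| := by
        intro x hx
        have := (hηbd (x, t) htpos.le).1
        rw [abs_of_pos (lt_of_lt_of_le hc₁ this)]
        exact this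
      have hmeas : Measurable fun x : ℝ => |η (x, t)| :=
        (hηm.comp (measurable_id.prodMk measurable_const)).abs
      have hsfin : volume s < ⊤ := by
        rw [hvols, Real.volume_Icc]
        exact ENNReal.ofReal_lt_top
      have hint : IntegrableOn (fun x : ℝ => |η (x, t)|) s := by
        refine Integrable.mono' (g := fun _ => c₂) (integrableOn_const hsfin.ne)
          hmeas.aestronglyMeasurable ?_
        filter_upwards [ae_restrict_mem hsm] with x hx
        rw [Real.norm_eq_abs, abs_abs]
        have h1 := (hηbd (x, t) htpos.le).1
        have h2 := (hηbd (x, t) htpos.le).2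
        rw [abs_of_pos (lt_of_lt_of_le hc₁ h1)]
        exact h2
      have hmono : ∫ x in s, c₁ ≤ ∫ x in s, |η (x, t)| :=
        setIntegral_mono_on (integrableOn_const hsfin.ne) hint hsm hc₁'
      have hconst : ∫ x in s, (c₁ : ℝ) = c₁ * (b - a) := by
        rw [setIntegral_const, measureReal_def, hvols, Real.volume_Icc, smul_eq_mul,
          ENNReal.toReal_ofReal (by linarith)]
        ring
      simpa [hconst] using hmono
    have : c₁ * (b - a) ≤ ∫ x in g '' s, (1 : ℝ) := by
      rw [hcov]; exact hR
    exact le_trans this hL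
  -- extend to all t ≥ 0 by continuity and density
  intro t htpos a b hab
  set S : Set ℝ := {t : ℝ | c₁ * (b - a) ≤ |γ (b, t) - γ (a, t)|} with hSdef
  have hScl : IsClosed S := by
    have hcont : Continuous fun t : ℝ => |γ (b, t) - γ (a, t)| := by
      have h1 : Continuous fun t : ℝ => γ (b, t) :=
        hγ.continuous.comp (continuous_const.prodMk continuous_id)
      have h2 : Continuous fun t : ℝ => γ (a, t) :=
        hγ.continuous.comp (continuous_const.prodMk continuous_id)
      exact (h1.sub h2).abs
    exact isClosed_le continuous_const hcont
  have hIoi : Set.Ioi (0 : ℝ) ⊆ S := by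
    intro u hu
    -- the full measure set where hae holds is dense near u
    set E : Set ℝ := {t : ℝ | ∀ a b : ℝ, a ≤ b → 0 < t →
      c₁ * (b - a) ≤ |γ (b, t) - γ (a, t)|} with hEdef
    have hucl : u ∈ closure (E ∩ Set.Ioi 0) := by
      rw [mem_closure_iff]
      intro O hO huO
      have hO' : IsOpen (O ∩ Set.Ioi 0) := hO.inter isOpen_Ioi
      have huO' : u ∈ O ∩ Set.Ioi 0 := ⟨huO, hu⟩
      have hpos : 0 < volume (O ∩ Set.Ioi 0) := hO'.measure_pos volume ⟨u, huO'⟩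
      by_contra hcon
      rw [Set.not_nonempty_iff_eq_empty] at hcon
      have hsub : O ∩ Set.Ioi 0 ⊆ {t | ¬ (∀ a b : ℝ, a ≤ b → 0 < t →
          c₁ * (b - a) ≤ |γ (b, t) - γ (a, t)|)} := by
        intro x hx
        intro hxE
        have : x ∈ O ∩ (E ∩ Set.Ioi 0) := ⟨hx.1, hxE, hx.2⟩
        rw [hcon] at this
        exact this
      have : volume (O ∩ Set.Ioi 0) = 0 :=
        measure_mono_null hsub (ae_iff.1 hae)
      exact absurd this hpos.ne'
    have : u ∈ closure S := by
      refine closure_mono ?_ hucl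
      intro x hx
      exact hx.1 a b hab hx.2
    rwa [hScl.closure_eq] at this
  have : Set.Ici (0 : ℝ) ⊆ S := by
    have h1 : closure (Set.Ioi (0 : ℝ)) ⊆ S := by
      rw [← hScl.closure_eq]
      exact closure_mono hIoi
    rwa [closure_Ioi] at h1
  exact this htpos

/-- A test function in `C_c^∞(ℝ × [0,∞))` (smooth, compactly supported on space-time). -/
def IsTestFun (φ : ℝ × ℝ → ℝ) : Prop :=
  ContDiff ℝ (⊤ : ℕ∞) φ ∧ HasCompactSupport φ

/-- The weak form `∬_{t>0} (φ_t·a + φ_x·b) dx dt + ∫ φ(x,0)·f(x) dx`. -/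
noncomputable def weakForm (a b : ℝ × ℝ → ℝ) (f : ℝ → ℝ) (φ : ℝ × ℝ → ℝ) : ℝ :=
  (∫ q in {q : ℝ × ℝ | 0 < q.2},
      (fderiv ℝ φ q (0, 1) * a q + fderiv ℝ φ q (1, 0) * b q))
    + ∫ x : ℝ, φ (x, 0) * f x

/-- The inverse particle path: `(x,t) ↦ (γ(·,t)⁻¹(x), t)`. -/
noncomputable def pathInv (γ : ℝ × ℝ → ℝ) (q : ℝ × ℝ) : ℝ × ℝ :=
  (Function.invFun (fun x => γ (x, q.2)) q.1, q.2)

/-- **admissibility correspondence in Theorem 2.** If `(η,w,v)` is a weak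
solution of the particle-path system of isentropic gas dynamics with data `(1, ρ₀u₀, ρ₀)`,
`γ` the associated weak particle path (each `γ(·,t)` bi-Lipschitz), `ρ = (v/η)∘γ⁻¹`,
`u = (w/v)∘γ⁻¹`, and `(X,Q)` is continuous on `(0,∞) × ℝ`: if the Lagrangian admissibility
inequality `∬ ∂_tφ̃·η·X(v/η,w/η) + ∂_xφ̃·(Q(v/η,w/η) − (w/v)·X(v/η,w/η)) ≥ 0` holds for
every nonnegative compactly supported Lipschitz `φ̃` on `ℝ × (0,∞)`, then the Eulerian
admissibility inequality `∬ φ_t·X(ρ,ρu) + φ_x·Q(ρ,ρu) ≥ 0` holds for every nonnegative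
`φ ∈ C_c^∞(ℝ × (0,∞))`. -/
theorem isentropic_admissibility_transfer
    (p : ℝ → ℝ) (hp : ContinuousOn p (Set.Ioi 0))
    (ρ₀ u₀ : ℝ → ℝ) (hρ₀m : Measurable ρ₀) (hu₀m : Measurable u₀)
    (M₀ : ℝ) (hbd₀ : ∀ x : ℝ, |ρ₀ x| ≤ M₀ ∧ |u₀ x| ≤ M₀)
    (c₀ : ℝ) (hc₀ : 0 < c₀) (hρ₀c : ∀ x : ℝ, c₀ ≤ ρ₀ x)
    (η w v : ℝ × ℝ → ℝ)
    (hηm : Measurable η) (hwm : Measurable w) (hvm : Measurable v)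
    (Mw : ℝ) (hwbd : ∀ q : ℝ × ℝ, 0 ≤ q.2 → |w q| ≤ Mw)
    (c₁ c₂ : ℝ) (hc₁ : 0 < c₁) (hc₁₂ : c₁ ≤ c₂)
    (hηbd : ∀ q : ℝ × ℝ, 0 ≤ q.2 → c₁ ≤ η q ∧ η q ≤ c₂)
    (hvbd : ∀ q : ℝ × ℝ, 0 ≤ q.2 → c₁ ≤ v q ∧ v q ≤ c₂)
    (hweak1 : ∀ φ : ℝ × ℝ → ℝ, IsTestFun φ →
      weakForm η (fun q => -(w q / v q)) (fun _ => 1) φ = 0)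
    (hweak2 : ∀ φ : ℝ × ℝ → ℝ, IsTestFun φ →
      weakForm w (fun q => p (v q / η q)) (fun x => ρ₀ x * u₀ x) φ = 0)
    (hweak3 : ∀ φ : ℝ × ℝ → ℝ, IsTestFun φ →
      weakForm v (fun _ => 0) ρ₀ φ = 0)
    (γ : ℝ × ℝ → ℝ) (hγ : LocallyLipschitz γ) (hγ0 : ∀ x : ℝ, γ (x, 0) = x)
    (hγd : ∀ᵐ q : ℝ × ℝ ∂volume, 0 < q.2 →
      HasDerivAt (fun x => γ (x, q.2)) (η q) q.1 ∧
      HasDerivAt (fun s => γ (q.1, s)) (w q / v q) q.2)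
    (hbij : ∀ t : ℝ, 0 ≤ t →
      Function.Bijective (fun x => γ (x, t)) ∧
      ∃ K₁ K₂ : NNReal, LipschitzWith K₁ (fun x => γ (x, t)) ∧
        LipschitzWith K₂ (Function.invFun (fun x => γ (x, t))))
    (X Q : ℝ × ℝ → ℝ)
    (hX : ContinuousOn X (Set.Ioi 0 ×ˢ (Set.univ : Set ℝ)))
    (hQ : ContinuousOn Q (Set.Ioi 0 ×ˢ (Set.univ : Set ℝ)))
    (hadm : ∀ φL : ℝ × ℝ → ℝ, (∃ K : NNReal, LipschitzWith K φL) →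
      HasCompactSupport φL → tsupport φL ⊆ {q : ℝ × ℝ | 0 < q.2} →
      (∀ q : ℝ × ℝ, 0 ≤ φL q) →
      ∀ φLt φLx : ℝ × ℝ → ℝ,
        (∀ᵐ q : ℝ × ℝ ∂volume,
          HasDerivAt (fun s => φL (q.1, s)) (φLt q) q.2 ∧
          HasDerivAt (fun y => φL (y, q.2)) (φLx q) q.1) →
        0 ≤ ∫ q in {q : ℝ × ℝ | 0 < q.2},
          (φLt q * (η q * X (v q / η q, w q / η q))
            + φLx q * (Q (v q / η q, w q / η q)
                - (w q / v q) * X (v q / η q, w q / η q)))) :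
    ∀ φ : ℝ × ℝ → ℝ, IsTestFun φ → tsupport φ ⊆ {q : ℝ × ℝ | 0 < q.2} →
      (∀ q : ℝ × ℝ, 0 ≤ φ q) →
      0 ≤ ∫ q in {q : ℝ × ℝ | 0 < q.2},
        (fderiv ℝ φ q (0, 1) *
            X (v (pathInv γ q) / η (pathInv γ q),
               v (pathInv γ q) / η (pathInv γ q) * (w (pathInv γ q) / v (pathInv γ q)))
          + fderiv ℝ φ q (1, 0) *
            Q (v (pathInv γ q) / η (pathInv γ q),
               v (pathInv γ q) / η (pathInv γ q) * (w (pathInv γ q) / v (pathInv γ q)))) := by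
  intro φ hφ hsupp hφnn
  obtain ⟨hφs, hφc⟩ := hφ
  -- trivial case: empty support
  rcases (tsupport φ).eq_empty_or_nonempty with hK0e | hK0ne
  · have hφ0 : φ = fun _ => (0 : ℝ) := by
      funext q
      by_contra hq
      exact absurd (hK0e ▸ subset_tsupport φ hq) (Set.notMem_empty q)
    subst hφ0
    simp
  have hK0 : IsCompact (tsupport φ) := hφc
  -- geometric bounds on the support
  obtain ⟨qτ, hqτK, hqτmin'⟩ := hK0.exists_isMinOn hK0ne continuous_snd.continuousOn
  have hqτmin := isMinOn_iff.1 hqτmin'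
  set τ₀ : ℝ := qτ.2 with hτ₀def
  have hτ₀pos : 0 < τ₀ := hsupp hqτK
  obtain ⟨qT, hqTK, hqTmax'⟩ := hK0.exists_isMaxOn hK0ne continuous_snd.continuousOn
  have hqTmax := isMaxOn_iff.1 hqTmax'
  set T : ℝ := qT.2 with hTdef
  have hτ₀T : τ₀ ≤ T := hqTmax qτ hqτK
  have hTpos : 0 < T := lt_of_lt_of_le hτ₀pos hτ₀T
  obtain ⟨qA, hqAK, hqAmax'⟩ := hK0.exists_isMaxOn hK0ne ((continuous_fst.abs).continuousOn)
  have hqAmax := isMaxOn_iff.1 hqAmax'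
  set A : ℝ := |qA.1| with hAdef
  have hA0 : 0 ≤ A := abs_nonneg _
  -- bound for γ(0,·) on [0,T]
  obtain ⟨t₀, ht₀, hC₀max'⟩ := (isCompact_Icc (a := (0:ℝ)) (b := T)).exists_isMaxOn
    (Set.nonempty_Icc.2 hTpos.le)
    ((hγ.continuous.comp (continuous_const.prodMk continuous_id)).abs.continuousOn)
  have hC₀max := isMaxOn_iff.1 hC₀max'
  set C₀ : ℝ := |γ (0, t₀)| with hC₀def
  have growth := growth_of_slices γ η w v hγ hηm c₁ c₂ hc₁ hηbd hγd hbij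
  set Γ : ℝ × ℝ → ℝ × ℝ := fun q => (γ q, q.2) with hΓdef
  have hΓll : LocallyLipschitz Γ :=
    hγ.prodMk (LipschitzWith.prod_snd.locallyLipschitz)
  set B : ℝ := (A + C₀) / c₁ with hBdef
  have hB : ∀ q : ℝ × ℝ, Γ q ∈ tsupport φ → |q.1| ≤ B ∧ τ₀ ≤ q.2 ∧ q.2 ≤ T := by
    intro q hq
    have h2 : τ₀ ≤ q.2 := hqτmin (Γ q) hq
    have h3 : q.2 ≤ T := hqTmax (Γ q) hq
    have h0 : 0 ≤ q.2 := le_trans hτ₀pos.le h2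
    have hγA : |γ q| ≤ A := hqAmax (Γ q) hq
    have hγ0b : |γ (0, q.2)| ≤ C₀ := hC₀max q.2 ⟨h0, h3⟩
    have hgrow : c₁ * |q.1| ≤ |γ (q.1, q.2) - γ (0, q.2)| := by
      rcases le_total 0 q.1 with hq1 | hq1
      · have := growth q.2 h0 0 q.1 hq1
        rw [abs_of_nonneg hq1]
        simpa using this
      · have := growth q.2 h0 q.1 0 hq1
        rw [abs_of_nonpos hq1]
        rw [abs_sub_comm] at this
        simpa using this
    have htri : |γ (q.1, q.2) - γ (0, q.2)| ≤ A + C₀ := by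
      have h := abs_add_le (γ (q.1, q.2)) (-(γ (0, q.2)))
      rw [abs_neg] at h
      have h2 : |γ (q.1, q.2) - γ (0, q.2)| ≤ |γ (q.1, q.2)| + |γ (0, q.2)| := by
        rw [sub_eq_add_neg]; exact h
      exact le_trans h2 (add_le_add hγA hγ0b)
    refine ⟨?_, h2, h3⟩
    rw [hBdef, le_div_iff₀ hc₁]
    calc |q.1| * c₁ = c₁ * |q.1| := mul_comm _ _
      _ ≤ A + C₀ := le_trans hgrow htri
  -- the Lagrangian test function
  set φL : ℝ × ℝ → ℝ := fun q => φ (Γ q) with hφLdef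
  set box : Set (ℝ × ℝ) := Set.Icc (-B) B ×ˢ Set.Icc τ₀ T with hboxdef
  have hφLsupp : Function.support φL ⊆ box := by
    intro q hq
    have hΓq : Γ q ∈ tsupport φ := subset_tsupport φ hq
    obtain ⟨h1, h2, h3⟩ := hB q hΓq
    exact ⟨abs_le.1 h1, h2, h3⟩
  have hboxcl : IsClosed box := (isClosed_Icc.prod isClosed_Icc)
  have htsuppL : tsupport φL ⊆ box := closure_minimal hφLsupp hboxcl
  have hcsL : HasCompactSupport φL :=
    HasCompactSupport.intro (isCompact_Icc.prod isCompact_Icc)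
      (fun q hq => by
        by_contra hne
        exact hq (hφLsupp hne))
  have htsL : tsupport φL ⊆ {q : ℝ × ℝ | 0 < q.2} :=
    fun q hq => lt_of_lt_of_le hτ₀pos (htsuppL hq).2.1
  -- φL is Lipschitz
  obtain ⟨Kφ, hKφ⟩ := ContDiff.lipschitzWith_of_hasCompactSupport hφc hφs (by simp)
  set r : ℝ := max B T with hrdef
  have hboxball : box ⊆ Metric.closedBall 0 r := by
    intro q hq
    rw [Metric.mem_closedBall, Prod.dist_eq]
    have h1 : dist q.1 0 ≤ B := by
      rw [Real.dist_eq, sub_zero]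
      exact abs_le.2 hq.1
    have h2 : dist q.2 0 ≤ T := by
      rw [Real.dist_eq, sub_zero, abs_of_nonneg (le_trans hτ₀pos.le hq.2.1)]
      exact hq.2.2
    exact max_le (le_trans h1 (le_max_left _ _)) (le_trans h2 (le_max_right _ _))
  obtain ⟨KΓ, hKΓ⟩ := hΓll.exists_lipschitzOnWith
    (isCompact_closedBall (0 : ℝ × ℝ) (r + 1))
  have hlipOn : LipschitzOnWith (Kφ * KΓ) φL (Metric.closedBall 0 (r + 1)) :=
    hKφ.comp_lipschitzOnWith hKΓ
  obtain ⟨qM, hqMK, hqMmax'⟩ := hK0.exists_isMaxOn hK0ne (hφs.continuous.abs.continuousOn)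
  have hqMmax := isMaxOn_iff.1 hqMmax'
  set Mφ : ℝ := |φ qM| with hMφdef
  have hMφ : ∀ y, |φ y| ≤ Mφ := by
    intro y
    by_cases hy : y ∈ tsupport φ
    · exact hqMmax y hy
    · rw [image_eq_zero_of_notMem_tsupport hy, abs_zero]
      exact abs_nonneg _
  have hδdist : ∀ q, q ∉ Metric.closedBall (0 : ℝ × ℝ) (r + 1) →
      ∀ q' ∈ Metric.closedBall (0 : ℝ × ℝ) r, (1 : ℝ) ≤ dist q q' := by
    intro q hq q' hq'
    have h1 : r + 1 < dist q 0 := by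
      by_contra hcon
      exact hq (Metric.mem_closedBall.2 (not_lt.1 hcon))
    have h2 : dist q' 0 ≤ r := Metric.mem_closedBall.1 hq'
    have h3 : dist q 0 ≤ dist q q' + dist q' 0 := dist_triangle _ _ _
    linarith
  have hzero : ∀ q, q ∉ Metric.closedBall (0 : ℝ × ℝ) r → φL q = 0 := by
    intro q hq
    by_contra hne
    exact hq (hboxball (hφLsupp hne))
  obtain ⟨KL, hKL⟩ := lipschitzWith_of_lipschitzOnWith_of_support hlipOn hzero Mφ 1
    (fun q => hMφ (Γ q)) one_pos hδdist
  -- derivative candidates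
  set Dφ := fderiv ℝ φ with hDφdef
  set φLt : ℝ × ℝ → ℝ := fun q =>
    if 0 < q.2 then Dφ (Γ q) (0, 1) + Dφ (Γ q) (1, 0) * (w q / v q) else 0 with hφLtdef
  set φLx : ℝ × ℝ → ℝ := fun q =>
    if 0 < q.2 then Dφ (Γ q) (1, 0) * η q else 0 with hφLxdef
  have hφdiff : Differentiable ℝ φ := hφs.differentiable (by simp)
  have hZnull : volume {q : ℝ × ℝ | q.2 = 0} = 0 := by
    have : {q : ℝ × ℝ | q.2 = 0} = (Set.univ : Set ℝ) ×ˢ ({0} : Set ℝ) := by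
      ext q; simp [Set.mem_prod, Prod.ext_iff, eq_comm]
    rw [this]
    have : ((volume : Measure ℝ).prod volume) ((Set.univ : Set ℝ) ×ˢ ({0} : Set ℝ)) = 0 := by
      rw [Measure.prod_prod]
      simp
    exact this
  have hne0 : ∀ᵐ q : ℝ × ℝ ∂volume, q.2 ≠ 0 := by
    rw [ae_iff]
    simpa using hZnull
  have hder : ∀ᵐ q : ℝ × ℝ ∂volume,
      HasDerivAt (fun s => φL (q.1, s)) (φLt q) q.2 ∧
      HasDerivAt (fun y => φL (y, q.2)) (φLx q) q.1 := by
    filter_upwards [hγd, hne0] with q hq hq2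
    rcases lt_or_gt_of_ne hq2 with hneg | hpos
    · -- negative time: φL vanishes near q
      have hvan : ∀ z : ℝ × ℝ, z.2 < τ₀ → φL z = 0 := by
        intro z hz
        by_contra hne
        exact absurd (hφLsupp hne).2.1 (not_le.2 hz)
      constructor
      · have hev : (fun s => φL (q.1, s)) =ᶠ[nhds q.2] fun _ => (0 : ℝ) := by
          filter_upwards [isOpen_Iio.mem_nhds (show q.2 ∈ Set.Iio τ₀ from
            lt_trans hneg hτ₀pos)] with s hs
          exact hvan (q.1, s) hs
        have h0 : HasDerivAt (fun _ : ℝ => (0 : ℝ)) 0 q.2 := hasDerivAt_const _ _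
        have : HasDerivAt (fun s => φL (q.1, s)) 0 q.2 := h0.congr_of_eventuallyEq hev
        simpa [hφLtdef, if_neg (not_lt.2 hneg.le)] using this
      · have hfun : (fun y => φL (y, q.2)) = fun _ => (0 : ℝ) :=
          funext fun y => hvan (y, q.2) (lt_trans hneg hτ₀pos)
        have : HasDerivAt (fun y => φL (y, q.2)) 0 q.1 := by
          rw [hfun]; exact hasDerivAt_const _ _
        simpa [hφLxdef, if_neg (not_lt.2 hneg.le)] using this
    · obtain ⟨hdx, hdt⟩ := hq hpos
      have hφF : HasFDerivAt φ (Dφ (Γ q)) (Γ q) := (hφdiff (Γ q)).hasFDerivAt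
      constructor
      · have hk : HasDerivAt (fun s => (γ (q.1, s), s)) (w q / v q, 1) q.2 :=
          hdt.prodMk (hasDerivAt_id q.2)
        have hcomp : HasDerivAt (fun s => φ (γ (q.1, s), s)) (Dφ (Γ q) (w q / v q, 1)) q.2 :=
          hφF.comp_hasDerivAt_of_eq q.2 hk rfl
        have hval : Dφ (Γ q) (w q / v q, 1) = φLt q := by
          have hsum : ((w q / v q, 1) : ℝ × ℝ)
              = (w q / v q) • ((1 : ℝ), (0 : ℝ)) + ((0 : ℝ), (1 : ℝ)) := by
            simp [Prod.ext_iff]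
          rw [hsum, map_add, ContinuousLinearMap.map_smul, smul_eq_mul, hφLtdef]
          simp only [if_pos hpos]
          ring
        exact hval ▸ hcomp
      · have hk : HasDerivAt (fun y => (γ (y, q.2), q.2)) (η q, 0) q.1 :=
          hdx.prodMk (hasDerivAt_const q.1 q.2)
        have hcomp : HasDerivAt (fun y => φ (γ (y, q.2), q.2)) (Dφ (Γ q) (η q, 0)) q.1 :=
          hφF.comp_hasDerivAt_of_eq q.1 hk rfl
        have hval : Dφ (Γ q) (η q, 0) = φLx q := by
          have hsum : ((η q, 0) : ℝ × ℝ) = (η q) • ((1 : ℝ), (0 : ℝ)) := by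
            simp [Prod.ext_iff]
          rw [hsum, ContinuousLinearMap.map_smul, smul_eq_mul, hφLxdef]
          simp only [if_pos hpos]
          ring
        exact hval ▸ hcomp
  -- Lagrangian admissibility applied to φL
  have hlag := hadm φL ⟨KL, hKL⟩ hcsL htsL (fun q => hφnn (Γ q)) φLt φLx hder
  -- a.e. differentiability of Γ (Rademacher)
  have hdiffae : ∀ᵐ q : ℝ × ℝ ∂volume, DifferentiableAt ℝ Γ q := by
    have hn : ∀ n : ℕ, ∀ᵐ q : ℝ × ℝ ∂volume,
        q ∈ Metric.ball (0 : ℝ × ℝ) n → DifferentiableAt ℝ Γ q := by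
      intro n
      obtain ⟨K, hK⟩ := hΓll.exists_lipschitzOnWith (isCompact_closedBall (0 : ℝ × ℝ) n)
      have hKb : LipschitzOnWith K Γ (Metric.ball 0 n) :=
        hK.mono Metric.ball_subset_closedBall
      filter_upwards [hKb.ae_differentiableWithinAt_of_mem] with q hq hqb
      exact (hq hqb).differentiableAt (Metric.isOpen_ball.mem_nhds hqb)
    filter_upwards [ae_all_iff.2 hn] with q hq
    obtain ⟨n, hn'⟩ := exists_nat_gt (dist q (0 : ℝ × ℝ))
    exact hq n (Metric.mem_ball.2 hn')
  have hgood : ∀ᵐ q : ℝ × ℝ ∂volume, DifferentiableAt ℝ Γ q ∧ (0 < q.2 →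
      HasDerivAt (fun x => γ (x, q.2)) (η q) q.1 ∧
      HasDerivAt (fun s => γ (q.1, s)) (w q / v q) q.2) := hdiffae.and hγd
  set Ng : Set (ℝ × ℝ) := toMeasurable volume {q : ℝ × ℝ | ¬ (DifferentiableAt ℝ Γ q ∧
      (0 < q.2 → HasDerivAt (fun x => γ (x, q.2)) (η q) q.1 ∧
      HasDerivAt (fun s => γ (q.1, s)) (w q / v q) q.2))} with hNgdef
  have hNgnull : volume Ng = 0 := by
    rw [hNgdef, measure_toMeasurable]
    exact ae_iff.1 hgood
  set sg : Set (ℝ × ℝ) := {q : ℝ × ℝ | 0 < q.2} \ Ng with hsgdef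
  have hmeas0 : MeasurableSet {q : ℝ × ℝ | 0 < q.2} :=
    measurableSet_lt measurable_const measurable_snd
  have hsgm : MeasurableSet sg := hmeas0.diff (measurableSet_toMeasurable _ _)
  have hsgP : ∀ q ∈ sg, DifferentiableAt ℝ Γ q ∧ (0 < q.2 →
      HasDerivAt (fun x => γ (x, q.2)) (η q) q.1 ∧
      HasDerivAt (fun s => γ (q.1, s)) (w q / v q) q.2) := by
    intro q hq
    by_contra hcon
    exact hq.2 (subset_toMeasurable _ _ hcon)
  have hsgpos : ∀ q ∈ sg, 0 < q.2 := fun q hq => hq.1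
  have hf1 : ∀ q ∈ sg, (fderiv ℝ Γ q) (1, 0) = (η q, 0) := by
    intro q hq
    obtain ⟨hdiffq, hsl⟩ := hsgP q hq
    obtain ⟨hdx, hdt⟩ := hsl (hsgpos q hq)
    have d2 : HasDerivAt (fun y => Γ (y, q.2)) (η q, 0) q.1 :=
      hdx.prodMk (hasDerivAt_const q.1 q.2)
    have d1 : HasDerivAt (fun y => Γ (y, q.2)) ((fderiv ℝ Γ q) (1, 0)) q.1 :=
      hdiffq.hasFDerivAt.comp_hasDerivAt_of_eq q.1
        ((hasDerivAt_id q.1).prodMk (hasDerivAt_const q.1 q.2)) rfl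
    exact d1.unique d2
  have hf2 : ∀ q ∈ sg, (fderiv ℝ Γ q) (0, 1) = (w q / v q, 1) := by
    intro q hq
    obtain ⟨hdiffq, hsl⟩ := hsgP q hq
    obtain ⟨hdx, hdt⟩ := hsl (hsgpos q hq)
    have d2 : HasDerivAt (fun s => Γ (q.1, s)) (w q / v q, 1) q.2 :=
      hdt.prodMk (hasDerivAt_id q.2)
    have d1 : HasDerivAt (fun s => Γ (q.1, s)) ((fderiv ℝ Γ q) (0, 1)) q.2 :=
      hdiffq.hasFDerivAt.comp_hasDerivAt_of_eq q.2
        ((hasDerivAt_const q.2 q.1).prodMk (hasDerivAt_id q.2)) rfl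
    exact d1.unique d2
  have hdet : ∀ q ∈ sg, (fderiv ℝ Γ q).det = η q :=
    fun q hq => det_eq_of_basis _ _ _ (hf1 q hq) (hf2 q hq)
  have hfw : ∀ q ∈ sg, HasFDerivWithinAt Γ (fderiv ℝ Γ q) sg q :=
    fun q hq => ((hsgP q hq).1.hasFDerivAt).hasFDerivWithinAt
  have hinj : Set.InjOn Γ sg := by
    rintro ⟨a, t⟩ hq ⟨a', t'⟩ hq' heq
    have h2 : t = t' := congrArg Prod.snd heq
    subst h2
    have h1 : γ (a, t) = γ (a', t) := congrArg Prod.fst heq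
    have hb := (hbij t (hsgpos _ hq).le).1.injective
    have ha : a = a' := hb h1
    rw [ha]
  set G : ℝ × ℝ → ℝ := fun q =>
    Dφ q (0, 1) * X (v (pathInv γ q) / η (pathInv γ q),
        v (pathInv γ q) / η (pathInv γ q) * (w (pathInv γ q) / v (pathInv γ q)))
      + Dφ q (1, 0) * Q (v (pathInv γ q) / η (pathInv γ q),
        v (pathInv γ q) / η (pathInv γ q) * (w (pathInv γ q) / v (pathInv γ q))) with hGdef
  have hCoV := integral_image_eq_integral_abs_det_fderiv_smul volume hsgm hfw hinj G
  -- the two a.e. set identifications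
  have hseq : sg =ᵐ[volume] {q : ℝ × ℝ | 0 < q.2} := by
    rw [ae_eq_set]
    constructor
    · have hemp : sg \ {q : ℝ × ℝ | 0 < q.2} = ∅ := by
        ext q
        simp only [Set.mem_diff, Set.mem_setOf_eq, Set.mem_empty_iff_false, iff_false]
        rintro ⟨⟨hq1, _⟩, hq2⟩
        exact hq2 hq1
      rw [hemp]; exact measure_empty
    · refine measure_mono_null ?_ hNgnull
      rintro q ⟨hq1, hq2⟩
      by_contra hqN
      exact hq2 ⟨hq1, hqN⟩
  have himgeq : (Γ '' sg) =ᵐ[volume] {q : ℝ × ℝ | 0 < q.2} := by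
    rw [ae_eq_set]
    constructor
    · have hemp : Γ '' sg \ {q : ℝ × ℝ | 0 < q.2} = ∅ := by
        ext x
        simp only [Set.mem_diff, Set.mem_empty_iff_false, iff_false, Set.mem_setOf_eq]
        rintro ⟨⟨q, hq, rfl⟩, hx⟩
        exact hx (hsgpos q hq)
      rw [hemp]; exact measure_empty
    · refine measure_mono_null (t := Γ '' ({q : ℝ × ℝ | 0 < q.2} ∩ Ng)) ?_
        (hΓll.image_null (measure_mono_null Set.inter_subset_right hNgnull))
      rintro x ⟨hxpos, hximg⟩
      obtain ⟨y, hy⟩ := (hbij x.2 (le_of_lt hxpos)).1.surjective x.1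
      have hΓq : Γ (y, x.2) = x := Prod.ext hy rfl
      by_cases hqN : (y, x.2) ∈ Ng
      · exact ⟨(y, x.2), ⟨hxpos, hqN⟩, hΓq⟩
      · exact absurd ⟨(y, x.2), ⟨hxpos, hqN⟩, hΓq⟩ hximg
  -- pointwise identity on sg
  have hpt : ∀ q ∈ sg, |(fderiv ℝ Γ q).det| • G (Γ q)
      = φLt q * (η q * X (v q / η q, w q / η q))
        + φLx q * (Q (v q / η q, w q / η q)
            - (w q / v q) * X (v q / η q, w q / η q)) := by
    intro q hq
    have hpos := hsgpos q hq
    have hPinv : pathInv γ (Γ q) = q := by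
      have hinv : Function.invFun (fun x => γ (x, q.2)) (γ q) = q.1 :=
        Function.leftInverse_invFun (hbij q.2 hpos.le).1.injective q.1
      show (Function.invFun (fun x => γ (x, (Γ q).2)) (Γ q).1, (Γ q).2) = q
      exact Prod.ext hinv rfl
    have hvpos : 0 < v q := lt_of_lt_of_le hc₁ (hvbd q hpos.le).1
    have hηpos : 0 < η q := lt_of_lt_of_le hc₁ (hηbd q hpos.le).1
    have harg : v q / η q * (w q / v q) = w q / η q := by
      field_simp
    rw [hdet q hq, abs_of_pos hηpos, smul_eq_mul, hGdef]
    simp only [hPinv, harg, hφLtdef, hφLxdef, if_pos hpos]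
    ring
  have ekey : (∫ q in {q : ℝ × ℝ | 0 < q.2},
      (φLt q * (η q * X (v q / η q, w q / η q))
        + φLx q * (Q (v q / η q, w q / η q)
            - (w q / v q) * X (v q / η q, w q / η q))))
      = ∫ q in {q : ℝ × ℝ | 0 < q.2}, G q := by
    calc (∫ q in {q : ℝ × ℝ | 0 < q.2},
        (φLt q * (η q * X (v q / η q, w q / η q))
          + φLx q * (Q (v q / η q, w q / η q)
              - (w q / v q) * X (v q / η q, w q / η q))))
        = ∫ q in sg, (φLt q * (η q * X (v q / η q, w q / η q))
          + φLx q * (Q (v q / η q, w q / η q)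
              - (w q / v q) * X (v q / η q, w q / η q))) :=
          (setIntegral_congr_set hseq).symm
      _ = ∫ q in sg, |(fderiv ℝ Γ q).det| • G (Γ q) :=
          (setIntegral_congr_fun hsgm fun q hq => hpt q hq).symm
      _ = ∫ x in Γ '' sg, G x := hCoV.symm
      _ = ∫ q in {q : ℝ × ℝ | 0 < q.2}, G q := setIntegral_congr_set himgeq
  show 0 ≤ ∫ q in {q : ℝ × ℝ | 0 < q.2}, G q
  rw [← ekey]
  exact hlag
end

section
/- Let α > 1, let Ω ⊆ ℝ × (0,∞) be open, and let ρ, u, p : Ω → ℝ be continuously differentiable with ρ > 0 and p > 0, satisfying pointwise the compressible gas dynamics equations ρ_t + (ρu)_x = 0, (ρu)_t + (ρu² + p)_x = 0, and (ρE)_t + (ρuE + pu)_x = 0, where E = p/((α−1)ρ) + u²/2. Then for every continuously differentiable X : (0,∞) → ℝ, the identity ∂_t[ρ·X(p·ρ^{−α})] + ∂_x[u·ρ·X(p·ρ^{−α})] = 0 holds at every point of Ω. -/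
/-- **verification direction of Proposition 3.** `C¹` positive solutions
`(ρ,u,p)` of the full compressible gas dynamics equations (mass, momentum and energy, with
`E = p/((α−1)ρ) + u²/2`, `α > 1`) on an open `Ω ⊆ ℝ × (0,∞)` satisfy the additional
conservation law `∂_t[ρ·X(p·ρ^{−α})] + ∂_x[u·ρ·X(p·ρ^{−α})] = 0` for every continuously
differentiable `X : (0,∞) → ℝ`. -/
theorem full_gas_dynamics_extra_conservation_laws
    (α : ℝ) (hα : 1 < α)
    (Ω : Set (ℝ × ℝ)) (hΩ : IsOpen Ω) (hΩt : ∀ q ∈ Ω, 0 < q.2)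
    (ρ u p : ℝ × ℝ → ℝ)
    (hρ : ContDiffOn ℝ 1 ρ Ω) (hu : ContDiffOn ℝ 1 u Ω) (hp : ContDiffOn ℝ 1 p Ω)
    (hρpos : ∀ q ∈ Ω, 0 < ρ q) (hppos : ∀ q ∈ Ω, 0 < p q)
    (heq1 : ∀ q ∈ Ω,
      fderiv ℝ ρ q (0, 1) + fderiv ℝ (fun r => ρ r * u r) q (1, 0) = 0)
    (heq2 : ∀ q ∈ Ω,
      fderiv ℝ (fun r => ρ r * u r) q (0, 1)
        + fderiv ℝ (fun r => ρ r * u r ^ 2 + p r) q (1, 0) = 0)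
    (heq3 : ∀ q ∈ Ω,
      fderiv ℝ (fun r => ρ r * (p r / ((α - 1) * ρ r) + u r ^ 2 / 2)) q (0, 1)
        + fderiv ℝ (fun r =>
            ρ r * u r * (p r / ((α - 1) * ρ r) + u r ^ 2 / 2) + p r * u r) q (1, 0) = 0) :
    ∀ X : ℝ → ℝ, ContDiffOn ℝ 1 X (Set.Ioi 0) →
      ∀ q ∈ Ω,
        fderiv ℝ (fun r => ρ r * X (p r * ρ r ^ (-α))) q (0, 1)
          + fderiv ℝ (fun r => u r * (ρ r * X (p r * ρ r ^ (-α)))) q (1, 0) = 0 := by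
  intro X hX q hq
  have hmem : Ω ∈ nhds q := hΩ.mem_nhds hq
  have hρd : DifferentiableAt ℝ ρ q := (hρ.contDiffAt hmem).differentiableAt one_ne_zero
  have hud : DifferentiableAt ℝ u q := (hu.contDiffAt hmem).differentiableAt one_ne_zero
  have hpd : DifferentiableAt ℝ p q := (hp.contDiffAt hmem).differentiableAt one_ne_zero
  have ha : (0:ℝ) < ρ q := hρpos q hq
  have hc : (0:ℝ) < p q := hppos q hq
  have hα1 : α - 1 ≠ 0 := sub_ne_zero.2 (ne_of_gt hα)
  set Dρ := fderiv ℝ ρ q with hDρ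
  set Du := fderiv ℝ u q with hDu
  set Dp := fderiv ℝ p q with hDp
  have hρf : HasFDerivAt ρ Dρ q := hρd.hasFDerivAt
  have huf : HasFDerivAt u Du q := hud.hasFDerivAt
  have hpf : HasFDerivAt p Dp q := hpd.hasFDerivAt
  -- derivative of ρ^{-α}
  have hpow : HasFDerivAt (fun r => ρ r ^ (-α)) ((-α * ρ q ^ (-α - 1)) • Dρ) q :=
    hρf.rpow_const (Or.inl ha.ne')
  have hS : HasFDerivAt (fun r => p r * ρ r ^ (-α))
      (p q • ((-α * ρ q ^ (-α - 1)) • Dρ) + (ρ q ^ (-α)) • Dp) q := hpf.mul hpow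
  have hspos : (0:ℝ) < p q * ρ q ^ (-α) := mul_pos hc (Real.rpow_pos_of_pos ha _)
  have hXd : DifferentiableAt ℝ X (p q * ρ q ^ (-α)) :=
    (hX.contDiffAt (isOpen_Ioi.mem_nhds hspos)).differentiableAt one_ne_zero
  have hXf : HasDerivAt X (deriv X (p q * ρ q ^ (-α))) (p q * ρ q ^ (-α)) := hXd.hasDerivAt
  have hcomp : HasFDerivAt (fun r => X (p r * ρ r ^ (-α)))
      ((deriv X (p q * ρ q ^ (-α))) •
        (p q • ((-α * ρ q ^ (-α - 1)) • Dρ) + (ρ q ^ (-α)) • Dp)) q :=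
    hXf.comp_hasFDerivAt q hS
  have hg1 : HasFDerivAt (fun r => ρ r * X (p r * ρ r ^ (-α)))
      (ρ q • ((deriv X (p q * ρ q ^ (-α))) •
        (p q • ((-α * ρ q ^ (-α - 1)) • Dρ) + (ρ q ^ (-α)) • Dp))
        + (X (p q * ρ q ^ (-α))) • Dρ) q := hρf.mul hcomp
  have hg2 : HasFDerivAt (fun r => u r * (ρ r * X (p r * ρ r ^ (-α))))
      (u q • (ρ q • ((deriv X (p q * ρ q ^ (-α))) •
        (p q • ((-α * ρ q ^ (-α - 1)) • Dρ) + (ρ q ^ (-α)) • Dp))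
        + (X (p q * ρ q ^ (-α))) • Dρ)
        + (ρ q * X (p q * ρ q ^ (-α))) • Du) q := huf.mul hg1
  -- squares and cubes of u
  have hu2 : HasFDerivAt (fun r => u r ^ 2) (((2:ℕ) * u q ^ (2-1) : ℝ) • Du) q :=
    (hasDerivAt_pow 2 (u q)).comp_hasFDerivAt q huf
  have hu3 : HasFDerivAt (fun r => u r ^ 3) (((3:ℕ) * u q ^ (3-1) : ℝ) • Du) q :=
    (hasDerivAt_pow 3 (u q)).comp_hasFDerivAt q huf
  -- rewrite equations to scalar form
  have e1 := heq1 q hq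
  rw [(HasFDerivAt.fderiv (f := fun r => ρ r * u r) (hρf.mul huf))] at e1
  have e2 := heq2 q hq
  rw [(HasFDerivAt.fderiv (f := fun r => ρ r * u r) (hρf.mul huf)),
    (HasFDerivAt.fderiv (f := fun r => ρ r * u r ^ 2 + p r) ((hρf.mul hu2).add hpf))] at e2
  -- energy equation: replace by simpler eventually-equal functions
  have hev : ∀ᶠ r in nhds q, ρ r ≠ 0 := hρd.continuousAt.eventually_ne ha.ne'
  have hE1 : (fun r => ρ r * (p r / ((α - 1) * ρ r) + u r ^ 2 / 2))
      =ᶠ[nhds q] (fun r => p r * (α - 1)⁻¹ + ρ r * u r ^ 2 * (2:ℝ)⁻¹) := by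
    filter_upwards [hev] with r hr
    field_simp
  have hE2 : (fun r => ρ r * u r * (p r / ((α - 1) * ρ r) + u r ^ 2 / 2) + p r * u r)
      =ᶠ[nhds q] (fun r => u r * p r * (α - 1)⁻¹ + ρ r * u r ^ 3 * (2:ℝ)⁻¹ + p r * u r) := by
    filter_upwards [hev] with r hr
    field_simp
  have e3 := heq3 q hq
  rw [hE1.fderiv_eq, hE2.fderiv_eq,
      (HasFDerivAt.fderiv (f := fun r => p r * (α - 1)⁻¹ + ρ r * u r ^ 2 * (2:ℝ)⁻¹)
        ((hpf.mul_const ((α - 1)⁻¹)).add ((hρf.mul hu2).mul_const ((2:ℝ)⁻¹)))),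
      (HasFDerivAt.fderiv
        (f := fun r => u r * p r * (α - 1)⁻¹ + ρ r * u r ^ 3 * (2:ℝ)⁻¹ + p r * u r)
        ((((huf.mul hpf).mul_const ((α - 1)⁻¹)).add
        ((hρf.mul hu3).mul_const ((2:ℝ)⁻¹))).add (hpf.mul huf)))] at e3
  rw [hg1.fderiv, hg2.fderiv]
  simp only [ContinuousLinearMap.add_apply, ContinuousLinearMap.smul_apply, smul_eq_mul,
    Nat.cast_ofNat, pow_one] at e1 e2 e3 ⊢
  -- abbreviations
  set at' := Dρ (0, 1); set ax := Dρ (1, 0)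
  set bt := Du (0, 1); set bx := Du (1, 0)
  set ct := Dp (0, 1); set cx := Dp (1, 0)
  set a := ρ q; set b := u q; set c := p q
  set Xs := X (c * a ^ (-α)); set X' := deriv X (c * a ^ (-α))
  have hB : a ^ (-α - 1) * a = a ^ (-α) := by
    rw [← Real.rpow_add_one ha.ne']
    ring_nf
  -- pressure equation
  have pr : ct + b * cx + α * c * bx = 0 := by
    have h2 : a ^ 2 ≠ 0 := pow_ne_zero 2 ha.ne'
    field_simp at e3
    linear_combination e3 / 2 - ((α - 1) * b) * e2 + ((α - 1) * b ^ 2 / 2) * e1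
  linear_combination (Xs - α * a * c * (a ^ (-α - 1)) * X') * e1
    + (a * (a ^ (-α)) * X') * pr + (α * a * c * X' * bx) * hB
end

section
/- Let U ⊆ ℝ² be open and let z, w : U → ℝ be continuously differentiable functions of the variables (T,E) with Δ := z_T·w_E − z_E·w_T ≠ 0 on U. Let Ω ⊆ ℝ² be open (space-time variables (x,t)) and let T, E : Ω → ℝ be continuously differentiable with (T(x,t), E(x,t)) ∈ U for all (x,t) ∈ Ω, and suppose the composite functions z̃(x,t) := z(T(x,t), E(x,t)) and w̃(x,t) := w(T(x,t), E(x,t)) satisfy pointwise z̃_t + (T − E)·z̃_x = 0 and w̃_t + (T + E)·w̃_x = 0. Then at every point of Ω (with the partial derivatives of z and w evaluated at (T(x,t), E(x,t))): T_t + T·T_x = (E/Δ)·[ (z_T·w_E + z_E·w_T)·T_x + 2·z_E·w_E·E_x ] and E_t + T·E_x = −(E/Δ)·[ 2·z_T·w_T·T_x + (z_E·w_T + z_T·w_E)·E_x ]. -/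
/-- If the Riemann invariants `z, w` (as `C¹` functions of `(T,E)` on an
open set `U` with nonvanishing Jacobian `Δ = z_T·w_E − z_E·w_T`) composed with `C¹` fields
`T, E` on an open space-time set `Ω` satisfy the diagonal system `z̃_t + (T−E)z̃_x = 0`,
`w̃_t + (T+E)w̃_x = 0`, then `(T,E)` satisfy
`T_t + T·T_x = (E/Δ)[(z_T w_E + z_E w_T)T_x + 2 z_E w_E E_x]` and
`E_t + T·E_x = −(E/Δ)[2 z_T w_T T_x + (z_E w_T + z_T w_E)E_x]`. -/
theorem riemann_invariants_to_TE_system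
    (U : Set (ℝ × ℝ)) (hU : IsOpen U)
    (z w : ℝ × ℝ → ℝ)
    (hz : ContDiffOn ℝ 1 z U) (hw : ContDiffOn ℝ 1 w U)
    (hΔ : ∀ r ∈ U, fderiv ℝ z r (1, 0) * fderiv ℝ w r (0, 1)
      - fderiv ℝ z r (0, 1) * fderiv ℝ w r (1, 0) ≠ 0)
    (Ω : Set (ℝ × ℝ)) (hΩ : IsOpen Ω)
    (T E : ℝ × ℝ → ℝ)
    (hT : ContDiffOn ℝ 1 T Ω) (hE : ContDiffOn ℝ 1 E Ω)
    (hmem : ∀ q ∈ Ω, (T q, E q) ∈ U)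
    (hzeq : ∀ q ∈ Ω, fderiv ℝ (fun r => z (T r, E r)) q (0, 1)
      + (T q - E q) * fderiv ℝ (fun r => z (T r, E r)) q (1, 0) = 0)
    (hweq : ∀ q ∈ Ω, fderiv ℝ (fun r => w (T r, E r)) q (0, 1)
      + (T q + E q) * fderiv ℝ (fun r => w (T r, E r)) q (1, 0) = 0) :
    ∀ q ∈ Ω,
      (fderiv ℝ T q (0, 1) + T q * fderiv ℝ T q (1, 0)
        = (E q / (fderiv ℝ z (T q, E q) (1, 0) * fderiv ℝ w (T q, E q) (0, 1)
              - fderiv ℝ z (T q, E q) (0, 1) * fderiv ℝ w (T q, E q) (1, 0)))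
          * ((fderiv ℝ z (T q, E q) (1, 0) * fderiv ℝ w (T q, E q) (0, 1)
                + fderiv ℝ z (T q, E q) (0, 1) * fderiv ℝ w (T q, E q) (1, 0))
              * fderiv ℝ T q (1, 0)
            + 2 * fderiv ℝ z (T q, E q) (0, 1) * fderiv ℝ w (T q, E q) (0, 1)
              * fderiv ℝ E q (1, 0))) ∧
      (fderiv ℝ E q (0, 1) + T q * fderiv ℝ E q (1, 0)
        = -(E q / (fderiv ℝ z (T q, E q) (1, 0) * fderiv ℝ w (T q, E q) (0, 1)
              - fderiv ℝ z (T q, E q) (0, 1) * fderiv ℝ w (T q, E q) (1, 0)))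
          * (2 * fderiv ℝ z (T q, E q) (1, 0) * fderiv ℝ w (T q, E q) (1, 0)
              * fderiv ℝ T q (1, 0)
            + (fderiv ℝ z (T q, E q) (0, 1) * fderiv ℝ w (T q, E q) (1, 0)
                + fderiv ℝ z (T q, E q) (1, 0) * fderiv ℝ w (T q, E q) (0, 1))
              * fderiv ℝ E q (1, 0))) := by

  intro q hq
  have hp := hmem q hq
  have hzd : DifferentiableAt ℝ z (T q, E q) :=
    (hz.contDiffAt (hU.mem_nhds hp)).differentiableAt one_ne_zero
  have hwd : DifferentiableAt ℝ w (T q, E q) :=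
    (hw.contDiffAt (hU.mem_nhds hp)).differentiableAt one_ne_zero
  have hTd : DifferentiableAt ℝ T q :=
    (hT.contDiffAt (hΩ.mem_nhds hq)).differentiableAt one_ne_zero
  have hEd : DifferentiableAt ℝ E q :=
    (hE.contDiffAt (hΩ.mem_nhds hq)).differentiableAt one_ne_zero
  have hpair : HasFDerivAt (fun r => (T r, E r))
      ((fderiv ℝ T q).prod (fderiv ℝ E q)) q :=
    HasFDerivAt.prodMk hTd.hasFDerivAt hEd.hasFDerivAt
  have hczd : fderiv ℝ (fun r => z (T r, E r)) q
      = (fderiv ℝ z (T q, E q)).comp ((fderiv ℝ T q).prod (fderiv ℝ E q)) :=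
    (hzd.hasFDerivAt.comp q hpair).fderiv
  have hcwd : fderiv ℝ (fun r => w (T r, E r)) q
      = (fderiv ℝ w (T q, E q)).comp ((fderiv ℝ T q).prod (fderiv ℝ E q)) :=
    (hwd.hasFDerivAt.comp q hpair).fderiv
  set a := fderiv ℝ z (T q, E q) (1, 0) with ha
  set b := fderiv ℝ z (T q, E q) (0, 1) with hb
  set c := fderiv ℝ w (T q, E q) (1, 0) with hc
  set d := fderiv ℝ w (T q, E q) (0, 1) with hd
  set Tx := fderiv ℝ T q (1, 0) with hTx
  set Tt := fderiv ℝ T q (0, 1) with hTt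
  set Ex := fderiv ℝ E q (1, 0) with hEx
  set Et := fderiv ℝ E q (0, 1) with hEt
  have key : ∀ (L : (ℝ × ℝ) →L[ℝ] ℝ) (x y : ℝ), L (x, y) = x * L (1, 0) + y * L (0, 1) := by
    intro L x y
    have : (x, y) = x • ((1 : ℝ), (0 : ℝ)) + y • ((0 : ℝ), (1 : ℝ)) := by simp
    rw [this, map_add, map_smul, map_smul]; simp [mul_comm]
  have hΔq : a * d - b * c ≠ 0 := hΔ _ hp
  have e1 : (a * Tt + b * Et) + (T q - E q) * (a * Tx + b * Ex) = 0 := by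
    have h := hzeq q hq
    rw [hczd] at h
    simp only [ContinuousLinearMap.comp_apply, ContinuousLinearMap.prod_apply] at h
    rw [← hTt, ← hEt, ← hTx, ← hEx, key (fderiv ℝ z (T q, E q)) Tt Et,
      key (fderiv ℝ z (T q, E q)) Tx Ex, ← ha, ← hb] at h
    linear_combination h
  have e2 : (c * Tt + d * Et) + (T q + E q) * (c * Tx + d * Ex) = 0 := by
    have h := hweq q hq
    rw [hcwd] at h
    simp only [ContinuousLinearMap.comp_apply, ContinuousLinearMap.prod_apply] at h
    rw [← hTt, ← hEt, ← hTx, ← hEx, key (fderiv ℝ w (T q, E q)) Tt Et,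
      key (fderiv ℝ w (T q, E q)) Tx Ex, ← hc, ← hd] at h
    linear_combination h
  constructor
  · field_simp
    linear_combination d * e1 - b * e2
  · field_simp
    linear_combination (-c) * e1 + a * e2
end

section
/- Let V ⊆ ℝ² be open (variables (ξ,ζ)) and let B, C, D : V → ℝ be continuous, and let h̄, k : V → ℝ be continuously differentiable and satisfy at every point of V: ζ·(B·h̄_ξ + D·h̄_ζ) + h̄ + k_ξ = 0 and ζ·(C·h̄_ξ − B·h̄_ζ) + k_ζ = 0. Let Ω ⊆ ℝ² be open (space-time variables (x,t)) and let (ξ, ζ, η) : Ω → ℝ³ be continuously differentiable with η > 0 and (ξ,ζ) ∈ V, satisfying pointwise ξ_t = (ζ/η)·(B(ξ,ζ)·ξ_x + C(ξ,ζ)·ζ_x), ζ_t = (ζ/η)·(D(ξ,ζ)·ξ_x − B(ξ,ζ)·ζ_x), and η_t = ξ_x. Then ∂_t[ η·h̄(ξ,ζ) ] + ∂_x[ k(ξ,ζ) ] = 0 at every point of Ω. -/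
/-- **Proposition 5.** If `(h̄, k)` solve the first-order compatibility
system `ζ(B h̄_ξ + D h̄_ζ) + h̄ + k_ξ = 0`, `ζ(C h̄_ξ − B h̄_ζ) + k_ζ = 0` on an open
`V ⊆ ℝ²`, then along every `C¹` solution `(ξ,ζ,η)` with `η > 0` of the particle-path
system `ξ_t = (ζ/η)(B ξ_x + C ζ_x)`, `ζ_t = (ζ/η)(D ξ_x − B ζ_x)`, `η_t = ξ_x` one has
the conservation law `∂_t[η·h̄(ξ,ζ)] + ∂_x[k(ξ,ζ)] = 0`. -/
theorem particle_path_conservation_form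
    (V : Set (ℝ × ℝ)) (hV : IsOpen V)
    (B C D : ℝ × ℝ → ℝ)
    (hB : ContinuousOn B V) (hC : ContinuousOn C V) (hD : ContinuousOn D V)
    (hbar k : ℝ × ℝ → ℝ)
    (hhbar : ContDiffOn ℝ 1 hbar V) (hk : ContDiffOn ℝ 1 k V)
    (hrel1 : ∀ r ∈ V, r.2 * (B r * fderiv ℝ hbar r (1, 0) + D r * fderiv ℝ hbar r (0, 1))
      + hbar r + fderiv ℝ k r (1, 0) = 0)
    (hrel2 : ∀ r ∈ V, r.2 * (C r * fderiv ℝ hbar r (1, 0) - B r * fderiv ℝ hbar r (0, 1))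
      + fderiv ℝ k r (0, 1) = 0)
    (Ω : Set (ℝ × ℝ)) (hΩ : IsOpen Ω)
    (ξ ζ η : ℝ × ℝ → ℝ)
    (hξ : ContDiffOn ℝ 1 ξ Ω) (hζ : ContDiffOn ℝ 1 ζ Ω) (hη : ContDiffOn ℝ 1 η Ω)
    (hηpos : ∀ q ∈ Ω, 0 < η q) (hmem : ∀ q ∈ Ω, (ξ q, ζ q) ∈ V)
    (heq1 : ∀ q ∈ Ω, fderiv ℝ ξ q (0, 1)
      = (ζ q / η q) * (B (ξ q, ζ q) * fderiv ℝ ξ q (1, 0)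
          + C (ξ q, ζ q) * fderiv ℝ ζ q (1, 0)))
    (heq2 : ∀ q ∈ Ω, fderiv ℝ ζ q (0, 1)
      = (ζ q / η q) * (D (ξ q, ζ q) * fderiv ℝ ξ q (1, 0)
          - B (ξ q, ζ q) * fderiv ℝ ζ q (1, 0)))
    (heq3 : ∀ q ∈ Ω, fderiv ℝ η q (0, 1) = fderiv ℝ ξ q (1, 0)) :
    ∀ q ∈ Ω,
      fderiv ℝ (fun r => η r * hbar (ξ r, ζ r)) q (0, 1)
        + fderiv ℝ (fun r => k (ξ r, ζ r)) q (1, 0) = 0 := by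

  intro q hq
  have hr : (ξ q, ζ q) ∈ V := hmem q hq
  have hξd : HasFDerivAt ξ (fderiv ℝ ξ q) q :=
    (((hξ.contDiffAt (hΩ.mem_nhds hq)).differentiableAt one_ne_zero)).hasFDerivAt
  have hζd : HasFDerivAt ζ (fderiv ℝ ζ q) q :=
    (((hζ.contDiffAt (hΩ.mem_nhds hq)).differentiableAt one_ne_zero)).hasFDerivAt
  have hηd : HasFDerivAt η (fderiv ℝ η q) q :=
    (((hη.contDiffAt (hΩ.mem_nhds hq)).differentiableAt one_ne_zero)).hasFDerivAt
  have hHd : HasFDerivAt hbar (fderiv ℝ hbar (ξ q, ζ q)) (ξ q, ζ q) :=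
    (((hhbar.contDiffAt (hV.mem_nhds hr)).differentiableAt one_ne_zero)).hasFDerivAt
  have hKd : HasFDerivAt k (fderiv ℝ k (ξ q, ζ q)) (ξ q, ζ q) :=
    (((hk.contDiffAt (hV.mem_nhds hr)).differentiableAt one_ne_zero)).hasFDerivAt
  have hu : HasFDerivAt (fun r => (ξ r, ζ r))
      ((fderiv ℝ ξ q).prod (fderiv ℝ ζ q)) q := HasFDerivAt.prodMk hξd hζd
  have hcompH : HasFDerivAt (fun r => hbar (ξ r, ζ r))
      ((fderiv ℝ hbar (ξ q, ζ q)).comp ((fderiv ℝ ξ q).prod (fderiv ℝ ζ q))) q :=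
    hHd.comp q hu
  have hcompK : HasFDerivAt (fun r => k (ξ r, ζ r))
      ((fderiv ℝ k (ξ q, ζ q)).comp ((fderiv ℝ ξ q).prod (fderiv ℝ ζ q))) q :=
    hKd.comp q hu
  have hmul : HasFDerivAt (fun r => η r * hbar (ξ r, ζ r)) _ q := hηd.mul hcompH
  rw [hmul.fderiv, hcompK.fderiv]
  simp only [ContinuousLinearMap.add_apply, ContinuousLinearMap.smul_apply,
    ContinuousLinearMap.comp_apply, ContinuousLinearMap.prod_apply, smul_eq_mul]
  -- decompose linear maps on the pair
  have pairdec : ∀ (L : ℝ × ℝ →L[ℝ] ℝ) (p s : ℝ),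
      L (p, s) = p * L (1, 0) + s * L (0, 1) := by
    intro L p s
    have : (p, s) = p • ((1:ℝ), (0:ℝ)) + s • ((0:ℝ), (1:ℝ)) := by
      simp [Prod.ext_iff]
    rw [this, map_add, map_smul, map_smul, smul_eq_mul, smul_eq_mul]
  have HA : (fderiv ℝ hbar (ξ q, ζ q)) (fderiv ℝ ξ q (0,1), fderiv ℝ ζ q (0,1))
      = fderiv ℝ ξ q (0,1) * fderiv ℝ hbar (ξ q, ζ q) (1,0)
        + fderiv ℝ ζ q (0,1) * fderiv ℝ hbar (ξ q, ζ q) (0,1) := pairdec _ _ _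
  have KA : (fderiv ℝ k (ξ q, ζ q)) (fderiv ℝ ξ q (1,0), fderiv ℝ ζ q (1,0))
      = fderiv ℝ ξ q (1,0) * fderiv ℝ k (ξ q, ζ q) (1,0)
        + fderiv ℝ ζ q (1,0) * fderiv ℝ k (ξ q, ζ q) (0,1) := pairdec _ _ _
  rw [HA, KA]
  have e1 := heq1 q hq
  have e2 := heq2 q hq
  have e3 := heq3 q hq
  have r1 := hrel1 _ hr
  have r2 := hrel2 _ hr
  have hη0 : η q ≠ 0 := (hηpos q hq).ne'
  simp only at r1 r2
  rw [e1, e2, e3]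
  field_simp
  linear_combination (fderiv ℝ ξ q (1,0)) * r1 + (fderiv ℝ ζ q (1,0)) * r2
end
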